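/- arXiv:2109.13587 — 2 statements merged into one kernel-verified Lean document; each statement's English description precedes it below -/
import Mathlib

section
/- Let H : [0,1]×ℝ → ℝ be continuous, convex and superlinear in the second variable, with Lagrangian L, and let c ∈ ℝ satisfy c ≤ c_H. Define L̄(s,λ) := L(s,λ) for s ∈ (0,1) and L̄(s,λ) := L(s,λ) + c − L(s,0) for s ∈ {0,1}. Then for every absolutely continuous curve η : [a,b] → [0,1] with η(a) = η(b) one has ∫_a^b L(η(τ),η̇(τ)) dτ ≥ ∫_a^b L̄(η(τ),η̇(τ)) dτ ≥ c (b − a). -/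
open Set MeasureTheory Filter Topology
open scoped Classical

noncomputable section

/-! #### Absolutely continuous curves and extended-real integrals -/

/-- `ξ` is absolutely continuous on `[a,b]`, with `ξ'` as a choice of its a.e. derivative:
`ξ'` is integrable on `[a,b]` and the fundamental theorem of calculus holds. -/
def IsACDerivOn {E : Type*} [NormedAddCommGroup E] [NormedSpace ℝ E]
    (a b : ℝ) (ξ ξ' : ℝ → E) : Prop :=
  IntegrableOn ξ' (Icc a b) ∧ ∀ t ∈ Icc a b, ξ t = ξ a + ∫ τ in a..t, ξ' τ

/-- Extended-real integral on `[a,b]`, suited to integrands which are bounded from below: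
it is the Bochner integral when the integrand is a.e. finite and integrable, `+∞` otherwise. -/
def eIntegral (a b : ℝ) (f : ℝ → EReal) : EReal :=
  if IntegrableOn (fun τ => (f τ).toReal) (Icc a b) ∧
      (∀ᵐ τ ∂(volume.restrict (Icc a b)), f τ ≠ ⊤ ∧ f τ ≠ ⊥) then
    (((∫ τ in Icc a b, (f τ).toReal) : ℝ) : EReal)
  else ⊤

/-! #### One-dimensional Hamiltonians on `[0,1] × ℝ` -/

/-- Standing assumptions on a Hamiltonian `H : [0,1] × ℝ → ℝ`: continuity, convexity in the
momentum variable, and superlinearity in the momentum variable, uniformly in the state. -/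
structure IsHamiltonian (H : ℝ → ℝ → ℝ) : Prop where
  cont : ContinuousOn (fun p : ℝ × ℝ => H p.1 p.2) (Icc 0 1 ×ˢ univ)
  convex : ∀ s ∈ Icc (0:ℝ) 1, ConvexOn ℝ univ fun μ => H s μ
  superlinear : ∀ A : ℝ, ∃ R : ℝ, ∀ s ∈ Icc (0:ℝ) 1, ∀ μ : ℝ, R ≤ |μ| → A * |μ| ≤ H s μ

/-- The Lagrangian associated to `H` via the Fenchel transform:
`L(s,λ) = sup_μ (λ μ - H(s,μ))`. -/
def Lagr (H : ℝ → ℝ → ℝ) (s lam : ℝ) : ℝ :=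
  sSup (range fun μ => lam * μ - H s μ)

/-- `c_H = - max_{s ∈ [0,1]} min_{μ ∈ ℝ} H(s,μ)`. -/
def cHam (H : ℝ → ℝ → ℝ) : ℝ :=
  - sSup ((fun s => sInf (range fun μ => H s μ)) '' Icc 0 1)

/-- The modified Lagrangian `L̄`, equal to `L` for `s ∉ {0,1}` and to
`L(s,λ) + c - L(s,0)` for `s ∈ {0,1}`. -/
def Lbar (H : ℝ → ℝ → ℝ) (c : ℝ) (s lam : ℝ) : ℝ :=
  if s = 0 ∨ s = 1 then Lagr H s lam + c - Lagr H s 0 else Lagr H s lam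

/-- The extension `F` of `L̄` to `ℝ × ℝ` obtained by successive reflections:
`F(s,λ) = L̄(s-n,λ)` on `(n,n+1]` for even `n ∈ ℕ`, `F(s,λ) = L̄(1-s+n,λ)` on `(n,n+1]`
for odd `n ∈ ℕ`, `F(s,λ) = L̄(-s-n,λ)` on `(-n-1,-n]` for even `n ∈ ℕ` and
`F(s,λ) = L̄(s+n+1,λ)` on `(-n-1,-n]` for odd `n ∈ ℕ`; equivalently,
`F(s,λ) = L̄(dist(s, 2ℤ), λ)`. -/
def Fext (H : ℝ → ℝ → ℝ) (c : ℝ) (s lam : ℝ) : ℝ :=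
  Lbar H c |s - 2 * (round (s / 2) : ℝ)| lam

/-! #### Viscosity solutions on `Q = (0,1) × (0,+∞)` -/

/-- `Q = (0,1) × (0,+∞)`, first coordinate the state `s`, second the time `t`. -/
def Qset : Set (ℝ × ℝ) := Ioo 0 1 ×ˢ Ioi 0

/-- `∂Q = ([0,1] × {0}) ∪ ({0,1} × [0,+∞))`. -/
def bdQ : Set (ℝ × ℝ) := (Icc 0 1 ×ˢ {0}) ∪ (({0, 1} : Set ℝ) ×ˢ Ici 0)

/-- `∂⁻Q = ([0,1] × {0}) ∪ ({0} × [0,+∞))`. -/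
def bdQminus : Set (ℝ × ℝ) := (Icc 0 1 ×ˢ {0}) ∪ (({0} : Set ℝ) ×ˢ Ici 0)

/-- Viscosity subsolution of `U_t + H(s,U') = 0` in `Q`. -/
def IsViscSubsol (H : ℝ → ℝ → ℝ) (U : ℝ → ℝ → ℝ) : Prop :=
  ∀ Φ : ℝ → ℝ → ℝ, ContDiff ℝ 1 (fun p : ℝ × ℝ => Φ p.1 p.2) →
    ∀ p : ℝ × ℝ, p ∈ Qset →
      IsLocalMaxOn (fun q : ℝ × ℝ => U q.1 q.2 - Φ q.1 q.2) Qset p →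
      deriv (fun t => Φ p.1 t) p.2 + H p.1 (deriv (fun s => Φ s p.2) p.1) ≤ 0

/-- Viscosity supersolution of `U_t + H(s,U') = 0` in `Q`. -/
def IsViscSupersol (H : ℝ → ℝ → ℝ) (U : ℝ → ℝ → ℝ) : Prop :=
  ∀ Φ : ℝ → ℝ → ℝ, ContDiff ℝ 1 (fun p : ℝ × ℝ => Φ p.1 p.2) →
    ∀ p : ℝ × ℝ, p ∈ Qset →
      IsLocalMinOn (fun q : ℝ × ℝ => U q.1 q.2 - Φ q.1 q.2) Qset p →
      0 ≤ deriv (fun t => Φ p.1 t) p.2 + H p.1 (deriv (fun s => Φ s p.2) p.1)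

/-- The Lax–Oleinik value function associated to a boundary datum `g` on `∂Q`:
`V(s,t) = inf { g(s₀,t₀) + ∫_{t₀}^t L(η,η̇) dτ }`, the infimum being over points
`(s₀,t₀) ∈ ∂Q` with `t₀ ≤ t` (where `t₀ = t` is only allowed for the trivial curve) and over
absolutely continuous curves `η : [t₀,t] → [0,1]` with `η(t₀) = s₀`, `η(t) = s`. -/
def valOn (B : Set (ℝ × ℝ)) (H : ℝ → ℝ → ℝ) (g : ℝ → ℝ → ℝ) (s t : ℝ) : ℝ :=
  sInf {v : ℝ | ∃ s₀ t₀ : ℝ, (s₀, t₀) ∈ B ∧ (t₀ < t ∨ (t₀ = t ∧ s₀ = s)) ∧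
    ∃ η η' : ℝ → ℝ, IsACDerivOn t₀ t η η' ∧ (∀ τ ∈ Icc t₀ t, η τ ∈ Icc (0:ℝ) 1) ∧
      η t₀ = s₀ ∧ η t = s ∧
      (v : EReal) = ((g s₀ t₀ : ℝ) : EReal) +
        eIntegral t₀ t fun τ => ((Lagr H (η τ) (η' τ) : ℝ) : EReal)}

/-- Value function for the boundary datum on `∂Q`. -/
def valV (H : ℝ → ℝ → ℝ) (g : ℝ → ℝ → ℝ) : ℝ → ℝ → ℝ := valOn bdQ H g

/-- Value function for the boundary datum on `∂⁻Q`. -/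
def valW (H : ℝ → ℝ → ℝ) (g : ℝ → ℝ → ℝ) : ℝ → ℝ → ℝ := valOn bdQminus H g

/-! #### Embedded networks in `ℝ^N` -/

/-- Euclidean space `ℝ^N`. -/
abbrev EucN (N : ℕ) := EuclideanSpace ℝ (Fin N)

/-- A regular simple arc in `ℝ^N`, parametrized on `[0,1]`: a `C¹` injective curve with
nowhere vanishing (one-sided at the endpoints) derivative. -/
structure Arc (N : ℕ) where
  toFun : ℝ → EucN N
  deriv : ℝ → EucN N
  hasDeriv : ∀ s ∈ Icc (0:ℝ) 1, HasDerivWithinAt toFun (deriv s) (Icc 0 1) s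
  contDeriv : ContinuousOn deriv (Icc 0 1)
  deriv_ne_zero : ∀ s ∈ Icc (0:ℝ) 1, deriv s ≠ 0
  injOn : InjOn toFun (Icc 0 1)

/-- `γ'` is the inverse parametrization of `γ`: `γ'(s) = γ(1-s)` on `[0,1]`. -/
def Arc.IsInverse {N : ℕ} (γ γ' : Arc N) : Prop :=
  ∀ s ∈ Icc (0:ℝ) 1, γ'.toFun s = γ.toFun (1 - s)

/-- An embedded network in `ℝ^N`: a finite, connected collection of arcs, closed under
inverse parametrization, such that two arcs which are not inverse to each other meet only at
endpoints, vertices (endpoints of arcs) never lie in the interior of an arc, and no arc is a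
loop (this is subsumed by injectivity of the arcs on `[0,1]`). -/
structure EmbNetwork (N : ℕ) where
  arcs : Set (Arc N)
  finite : arcs.Finite
  nonempty : arcs.Nonempty
  closed_inv : ∀ γ ∈ arcs, ∃ γ' ∈ arcs, Arc.IsInverse γ γ'
  disj : ∀ γ ∈ arcs, ∀ γ' ∈ arcs, γ ≠ γ' → ¬ Arc.IsInverse γ γ' →
    (γ.toFun '' Ioo 0 1) ∩ (γ'.toFun '' Icc 0 1) = ∅
  no_vertex_inside : ∀ γ ∈ arcs, ∀ γ' ∈ arcs, ∀ s ∈ Ioo (0:ℝ) 1,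
    γ.toFun s ≠ γ'.toFun 0 ∧ γ.toFun s ≠ γ'.toFun 1
  connected : IsConnected (⋃ γ ∈ arcs, γ.toFun '' Icc 0 1)

namespace EmbNetwork

variable {N : ℕ}

/-- The support `Γ ⊆ ℝ^N` of the network. -/
def carrier (Γ : EmbNetwork N) : Set (EucN N) := ⋃ γ ∈ Γ.arcs, γ.toFun '' Icc 0 1

/-- The set `V` of vertices of the network. -/
def V (Γ : EmbNetwork N) : Set (EucN N) :=
  {x | ∃ γ ∈ Γ.arcs, γ.toFun 0 = x ∨ γ.toFun 1 = x}

/-- The geodesic distance on `Γ` induced by the Euclidean metric: the infimum of the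
euclidean lengths of absolutely continuous curves joining `x` to `y` within `Γ`. -/
def geoDist (Γ : EmbNetwork N) (x y : EucN N) : ℝ :=
  sInf {l : ℝ | ∃ ξ ξ' : ℝ → EucN N, IsACDerivOn 0 1 ξ ξ' ∧
    (∀ t ∈ Icc (0:ℝ) 1, ξ t ∈ Γ.carrier) ∧ ξ 0 = x ∧ ξ 1 = y ∧
    l = ∫ τ in Icc (0:ℝ) 1, ‖ξ' τ‖}

end EmbNetwork

/-! #### Hamiltonians, flux limiters and the Lagrangian on a network -/

/-- A Hamiltonian on the network `Γ`: a family of Hamiltonians indexed by the arcs, each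
satisfying the standing assumptions, with the compatibility condition
`H_{γ̃}(s,μ) = H_γ(1-s,-μ)` for inverse arcs. -/
structure IsNetworkHamiltonian {N : ℕ} (Γ : EmbNetwork N) (H : Arc N → ℝ → ℝ → ℝ) : Prop where
  isHam : ∀ γ ∈ Γ.arcs, IsHamiltonian (H γ)
  compat : ∀ γ ∈ Γ.arcs, ∀ γ' ∈ Γ.arcs, Arc.IsInverse γ γ' →
    ∀ s ∈ Icc (0:ℝ) 1, ∀ μ : ℝ, H γ' s μ = H γ (1 - s) (-μ)

/-- A flux limiter: constants `c x` for the vertices with `c x ≤ min_{γ ∈ Γ_x} c_γ`. -/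
def IsFluxLimiter {N : ℕ} (Γ : EmbNetwork N) (H : Arc N → ℝ → ℝ → ℝ)
    (c : EucN N → ℝ) : Prop :=
  ∀ x ∈ Γ.V, ∀ γ ∈ Γ.arcs, γ.toFun 1 = x → c x ≤ cHam (H γ)

/-- The Lagrangian `L : ℝ^N × ℝ^N → ℝ ∪ {+∞}` of the network, associated to the Hamiltonian
`H` and the flux limiter `c`:  `L(x,q) = L_γ(γ⁻¹(x), (q·γ̇)/|γ̇|²)` if `x ∈ γ((0,1))` and `q`
is parallel to `γ̇(γ⁻¹ x)`; at a vertex `x`, `L(x,0) = c x`, and for `q ≠ 0` tangent,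
`L(x,q) = min L_γ(1, (q·γ̇(1))/|γ̇(1)|²)`, the minimum over arcs `γ ∈ Γ_x` with `q` parallel
to `γ̇(1)`; `L(x,q) = +∞` if `(x,q) ∉ TΓ`. -/
def eLag {N : ℕ} (Γ : EmbNetwork N) (H : Arc N → ℝ → ℝ → ℝ) (c : EucN N → ℝ)
    (x q : EucN N) : EReal :=
  if x ∈ Γ.V then
    if q = 0 then ((c x : ℝ) : EReal)
    else if ∃ γ ∈ Γ.arcs, γ.toFun 1 = x ∧ ∃ lam : ℝ, q = lam • γ.deriv 1 then
      ((sInf {v : ℝ | ∃ γ ∈ Γ.arcs, γ.toFun 1 = x ∧ (∃ lam : ℝ, q = lam • γ.deriv 1) ∧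
        v = Lagr (H γ) 1 ((inner ℝ q (γ.deriv 1) : ℝ) / ‖γ.deriv 1‖ ^ 2)} : ℝ) : EReal)
    else ⊤
  else
    if ∃ γ ∈ Γ.arcs, ∃ s ∈ Ioo (0:ℝ) 1, γ.toFun s = x ∧ ∃ lam : ℝ, q = lam • γ.deriv s then
      ((sInf {v : ℝ | ∃ γ ∈ Γ.arcs, ∃ s ∈ Ioo (0:ℝ) 1, γ.toFun s = x ∧
        (∃ lam : ℝ, q = lam • γ.deriv s) ∧
        v = Lagr (H γ) s ((inner ℝ q (γ.deriv s) : ℝ) / ‖γ.deriv s‖ ^ 2)} : ℝ) : EReal)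
    else ⊤

/-- The (extended-real valued) action `∫_a^b L(ξ,ξ̇) dτ` of a curve. -/
def eAction {N : ℕ} (Γ : EmbNetwork N) (H : Arc N → ℝ → ℝ → ℝ) (c : EucN N → ℝ)
    (a b : ℝ) (ξ ξ' : ℝ → EucN N) : EReal :=
  eIntegral a b fun τ => eLag Γ H c (ξ τ) (ξ' τ)

/-- A curve `ξ : [a,b] → Γ` is admissible if there is a finite partition
`a = t₁ < t₂ < ⋯ < t_m = b` whose interior points are mapped to vertices, such that on each
open subinterval either the curve avoids the vertices and has distinct endpoints, or it is
constantly equal to a vertex. -/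
def Admissible {N : ℕ} (Γ : EmbNetwork N) (a b : ℝ) (ξ : ℝ → EucN N) : Prop :=
  ∃ (n : ℕ) (t : ℕ → ℝ), t 0 = a ∧ t n = b ∧ (∀ i, i < n → t i < t (i + 1)) ∧
    (∀ i, 0 < i → i < n → ξ (t i) ∈ Γ.V) ∧
    ∀ i, i < n →
      ((∀ τ ∈ Ioo (t i) (t (i + 1)), ξ τ ∉ Γ.V) ∧ ξ (t i) ≠ ξ (t (i + 1))) ∨
      ∃ x ∈ Γ.V, ∀ τ ∈ Ioo (t i) (t (i + 1)), ξ τ = x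

/-- The minimal action functional `S(x,t,y,r)`: the infimum of the actions
`∫_0^{r-t} L(ξ,ξ̇) dτ` over absolutely continuous curves `ξ : [0,r-t] → ℝ^N` with
`ξ(0) = x`, `ξ(r-t) = y`. -/
def minAction {N : ℕ} (Γ : EmbNetwork N) (H : Arc N → ℝ → ℝ → ℝ) (c : EucN N → ℝ)
    (x : EucN N) (t : ℝ) (y : EucN N) (r : ℝ) : ℝ :=
  sInf {v : ℝ | ∃ ξ ξ' : ℝ → EucN N, IsACDerivOn 0 (r - t) ξ ξ' ∧
    ξ 0 = x ∧ ξ (r - t) = y ∧ (v : EReal) = eAction Γ H c 0 (r - t) ξ ξ'}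

/-- The Lax–Oleinik formula on the network:
`u(x,t) = inf { ∫_0^t L(ξ,ξ̇) dτ + u₀(ξ(0)) }`, the infimum over absolutely continuous
curves `ξ : [0,t] → Γ` with `ξ(t) = x`. -/
def laxOleinik {N : ℕ} (Γ : EmbNetwork N) (H : Arc N → ℝ → ℝ → ℝ) (c : EucN N → ℝ)
    (u₀ : EucN N → ℝ) (x : EucN N) (t : ℝ) : ℝ :=
  sInf {v : ℝ | ∃ ξ ξ' : ℝ → EucN N, IsACDerivOn 0 t ξ ξ' ∧
    (∀ τ ∈ Icc 0 t, ξ τ ∈ Γ.carrier) ∧ ξ t = x ∧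
    (v : EReal) = ((u₀ (ξ 0) : ℝ) : EReal) + eAction Γ H c 0 t ξ ξ'}

/-! #### Sub- and supersolutions of the time-dependent problem on the network -/

/-- Subsolution of (HJΓ): for every arc, `v ∘ γ` is a viscosity subsolution on `Q`, and at
every vertex `x` and `t₀ > 0`, every `C¹` supertangent `ψ` to `v(x,·)` at `t₀` satisfies
`ψ'(t₀) ≤ c x`. -/
def IsNetSubsol {N : ℕ} (Γ : EmbNetwork N) (H : Arc N → ℝ → ℝ → ℝ) (c : EucN N → ℝ)
    (v : EucN N → ℝ → ℝ) : Prop :=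
  (∀ γ ∈ Γ.arcs, IsViscSubsol (H γ) fun s t => v (γ.toFun s) t) ∧
  ∀ x ∈ Γ.V, ∀ t₀ : ℝ, 0 < t₀ → ∀ ψ : ℝ → ℝ, ContDiff ℝ 1 ψ →
    IsLocalMax (fun t => v x t - ψ t) t₀ → deriv ψ t₀ ≤ c x

/-- Supersolution of (HJΓ): for every arc, `v ∘ γ` is a viscosity supersolution on `Q`, and
at every vertex `x` and `t₀ > 0`, if some `C¹` subtangent `φ` to `v(x,·)` at `t₀` has
`φ'(t₀) < c x`, then there is an arc `γ ∈ Γ_x` such that every `C¹` subtangent `Φ` to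
`v ∘ γ` at `(1,t₀)`, constrained to the closure of `Q`, satisfies
`Φ_t(1,t₀) + H_γ(1,Φ'(1,t₀)) ≥ 0`. -/
def IsNetSupersol {N : ℕ} (Γ : EmbNetwork N) (H : Arc N → ℝ → ℝ → ℝ) (c : EucN N → ℝ)
    (v : EucN N → ℝ → ℝ) : Prop :=
  (∀ γ ∈ Γ.arcs, IsViscSupersol (H γ) fun s t => v (γ.toFun s) t) ∧
  ∀ x ∈ Γ.V, ∀ t₀ : ℝ, 0 < t₀ → ∀ φ : ℝ → ℝ, ContDiff ℝ 1 φ →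
    IsLocalMin (fun t => v x t - φ t) t₀ → deriv φ t₀ < c x →
    ∃ γ ∈ Γ.arcs, γ.toFun 1 = x ∧
      ∀ Φ : ℝ → ℝ → ℝ, ContDiff ℝ 1 (fun p : ℝ × ℝ => Φ p.1 p.2) →
        IsLocalMinOn (fun p : ℝ × ℝ => v (γ.toFun p.1) p.2 - Φ p.1 p.2)
          (Icc 0 1 ×ˢ Ici 0) (1, t₀) →
        0 ≤ deriv (fun t => Φ 1 t) t₀ + H γ 1 (deriv (fun s => Φ s t₀) 1)


/-! #### Auxiliary lemmas for Statement 3 -/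

section Stmt3Aux

variable {H : ℝ → ℝ → ℝ}

lemma ham_bound (hH : IsHamiltonian H) (R : ℝ) :
    ∃ C, ∀ s ∈ Icc (0:ℝ) 1, ∀ μ ∈ Icc (-R) R, |H s μ| ≤ C := by
  obtain ⟨C, hC⟩ := (isCompact_Icc.prod isCompact_Icc).exists_bound_of_continuousOn
    (hH.cont.mono (prod_mono_right (subset_univ _)))
  exact ⟨C, fun s hs μ hμ => by simpa [Real.norm_eq_abs] using hC (s, μ) ⟨hs, hμ⟩⟩

lemma ham_lb (hH : IsHamiltonian H) : ∃ B, ∀ s ∈ Icc (0:ℝ) 1, ∀ μ : ℝ, B ≤ H s μ := by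
  obtain ⟨R, hR⟩ := hH.superlinear 0
  obtain ⟨C, hC⟩ := ham_bound hH |R|
  refine ⟨min 0 (-C), fun s hs μ => ?_⟩
  rcases le_or_gt |R| |μ| with h | h
  · have h1 := hR s hs μ ((le_abs_self R).trans h)
    have : (0:ℝ) * |μ| = 0 := by ring
    calc min 0 (-C) ≤ 0 := min_le_left _ _
      _ ≤ H s μ := by rw [this] at h1; exact h1
  · have h2 := hC s hs μ (abs_le.1 h.le)
    have := abs_le.1 h2
    calc min 0 (-C) ≤ -C := min_le_right _ _
      _ ≤ H s μ := by linarith [this.1]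

lemma lagr_bddAbove (hH : IsHamiltonian H) {s : ℝ} (hs : s ∈ Icc (0:ℝ) 1) (lam : ℝ) :
    BddAbove (range fun μ => lam * μ - H s μ) := by
  obtain ⟨R, hR⟩ := hH.superlinear |lam|
  obtain ⟨C, hC⟩ := ham_bound hH |R|
  refine ⟨max 0 (|lam| * |R| + C), ?_⟩
  rintro _ ⟨μ, rfl⟩
  show lam * μ - H s μ ≤ max 0 (|lam| * |R| + C)
  have hlm : lam * μ ≤ |lam| * |μ| := by
    calc lam * μ ≤ |lam * μ| := le_abs_self _
      _ = |lam| * |μ| := abs_mul _ _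
  rcases le_or_gt |R| |μ| with h | h
  · have h2 := hR s hs μ ((le_abs_self R).trans h)
    exact le_max_of_le_left (by linarith)
  · have h2 := abs_le.1 (hC s hs μ (abs_le.1 h.le))
    have h3 : |lam| * |μ| ≤ |lam| * |R| :=
      mul_le_mul_of_nonneg_left h.le (abs_nonneg _)
    exact le_max_of_le_right (by linarith [h2.1])

lemma le_lagr (hH : IsHamiltonian H) {s : ℝ} (hs : s ∈ Icc (0:ℝ) 1) (lam μ : ℝ) :
    lam * μ - H s μ ≤ Lagr H s lam :=
  le_csSup (lagr_bddAbove hH hs lam) (mem_range_self μ)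

lemma lagr_zero_le (hH : IsHamiltonian H) {s : ℝ} {m : ℝ}
    (hm : ∀ μ, H s m ≤ H s μ) : Lagr H s 0 ≤ -H s m := by
  apply csSup_le (range_nonempty _)
  rintro _ ⟨μ, rfl⟩
  have := hm μ
  simp only [zero_mul, zero_sub]
  linarith

lemma cont_ham_snd (hH : IsHamiltonian H) {s : ℝ} (hs : s ∈ Icc (0:ℝ) 1) :
    Continuous fun μ => H s μ := by
  rw [← continuousOn_univ]
  exact hH.cont.comp ((continuous_const.prodMk continuous_id).continuousOn)
    (fun μ _ => ⟨hs, mem_univ _⟩)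

lemma exists_min (hH : IsHamiltonian H) :
    ∃ R : ℝ, 0 ≤ R ∧ ∀ s ∈ Icc (0:ℝ) 1, ∃ m ∈ Icc (-R) R, ∀ μ, H s m ≤ H s μ := by
  obtain ⟨C₁, hC₁⟩ := ham_bound hH 0
  obtain ⟨R₀, hR₀⟩ := hH.superlinear (C₁ + 1)
  have hC₁0 : 0 ≤ C₁ := (abs_nonneg _).trans
    (hC₁ 0 ⟨le_refl _, zero_le_one⟩ 0 ⟨by norm_num, le_refl _⟩)
  set R := max |R₀| 1 with hRdef
  have hR1 : (1:ℝ) ≤ R := le_max_right _ _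
  refine ⟨R, by linarith, fun s hs => ?_⟩
  have h0mem : (0:ℝ) ∈ Icc (-R) R := ⟨by linarith, by linarith⟩
  obtain ⟨m, hmem, hmin⟩ := isCompact_Icc.exists_isMinOn ⟨0, h0mem⟩
    (cont_ham_snd hH hs).continuousOn
  refine ⟨m, hmem, fun μ => ?_⟩
  rcases le_or_gt |μ| R with h | h
  · exact isMinOn_iff.1 hmin μ ⟨neg_le_of_abs_le h, le_of_abs_le h⟩
  · have h1 := hR₀ s hs μ (((le_abs_self R₀).trans (le_max_left _ _)).trans h.le)
    have h2 := abs_le.1 (hC₁ s hs 0 ⟨by norm_num, le_refl _⟩)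
    have h3 : H s m ≤ H s 0 := isMinOn_iff.1 hmin 0 h0mem
    have h4 : (1:ℝ) ≤ |μ| := hR1.trans h.le
    nlinarith

lemma min_le_neg_c (hH : IsHamiltonian H) {c : ℝ} (hc : c ≤ cHam H) {s : ℝ}
    (hs : s ∈ Icc (0:ℝ) 1) {m : ℝ} (hm : ∀ μ, H s m ≤ H s μ) : H s m ≤ -c := by
  obtain ⟨B, hB⟩ := ham_lb hH
  obtain ⟨C₁, hC₁⟩ := ham_bound hH 0
  have h1 : H s m ≤ sInf (range fun μ => H s μ) := by
    apply le_csInf (range_nonempty _)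
    rintro _ ⟨μ, rfl⟩
    exact hm μ
  have hSba : BddAbove ((fun s => sInf (range fun μ => H s μ)) '' Icc 0 1) := by
    refine ⟨C₁, ?_⟩
    rintro _ ⟨s', hs', rfl⟩
    have hble : sInf (range fun μ => H s' μ) ≤ H s' 0 := by
      apply csInf_le ⟨B, ?_⟩ (mem_range_self 0)
      rintro _ ⟨μ, rfl⟩
      exact hB s' hs' μ
    have := abs_le.1 (hC₁ s' hs' 0 ⟨by norm_num, le_refl _⟩)
    linarith [this.2]
  have h2 : sInf (range fun μ => H s μ) ≤
      sSup ((fun s => sInf (range fun μ => H s μ)) '' Icc 0 1) :=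
    le_csSup hSba (mem_image_of_mem _ hs)
  have h3 : cHam H = -sSup ((fun s => sInf (range fun μ => H s μ)) '' Icc 0 1) := rfl
  rw [h3] at hc
  linarith

lemma c_le_lagr_zero (hH : IsHamiltonian H) {c : ℝ} (hc : c ≤ cHam H) {s : ℝ}
    (hs : s ∈ Icc (0:ℝ) 1) : c ≤ Lagr H s 0 := by
  obtain ⟨R, -, hmin⟩ := exists_min hH
  obtain ⟨m, -, hm⟩ := hmin s hs
  have h1 := le_lagr hH hs 0 m
  have h2 := min_le_neg_c hH hc hs hm
  have h3 : (0:ℝ) * m = 0 := by ring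
  rw [h3] at h1
  linarith

lemma acDeriv_continuousOn {a b : ℝ} (hab : a ≤ b) {η f : ℝ → ℝ}
    (hf : IntegrableOn f (Icc a b)) (hFTC : ∀ t ∈ Icc a b, η t = η a + ∫ τ in a..t, f τ) :
    ContinuousOn η (Icc a b) := by
  have h1 : ContinuousOn (fun t => η a + ∫ τ in a..t, f τ) (Icc a b) := by
    apply continuousOn_const.add
    have := intervalIntegral.continuousOn_primitive_interval
      (f := f) (a := a) (b := b) (μ := volume) (by rwa [uIcc_of_le hab])
    rwa [uIcc_of_le hab] at this
  exact h1.congr hFTC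

lemma mul_comp_integrableOn {a b : ℝ} {η f : ℝ → ℝ} {μ : ℝ → ℝ}
    (hf : IntegrableOn f (Icc a b)) (hηc : ContinuousOn η (Icc a b))
    (hrange : ∀ t ∈ Icc a b, η t ∈ Icc (0:ℝ) 1) (hμ : Continuous μ) :
    IntegrableOn (fun τ => μ (η τ) * f τ) (Icc a b) := by
  obtain ⟨Cμ, hCμ⟩ := (isCompact_Icc (a := (0:ℝ)) (b := 1)).exists_bound_of_continuousOn
    hμ.continuousOn
  apply MeasureTheory.Integrable.bdd_mul (c := Cμ) hf
    ((hμ.comp_continuousOn hηc).aestronglyMeasurable measurableSet_Icc)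
  rw [MeasureTheory.ae_restrict_iff' measurableSet_Icc]
  exact MeasureTheory.ae_of_all _ fun τ hτ => hCμ _ (hrange τ hτ)

/-- Substitution: for a closed absolutely continuous curve, `∫ μ(η) η' = 0`. -/
lemma subst_zero {a b : ℝ} (hab : a ≤ b) {f η : ℝ → ℝ}
    (hf : IntegrableOn f (Icc a b))
    (hFTC : ∀ t ∈ Icc a b, η t = η a + ∫ τ in a..t, f τ)
    (hrange : ∀ t ∈ Icc a b, η t ∈ Icc (0:ℝ) 1)
    {μ : ℝ → ℝ} (hμ : Continuous μ) (hend : η a = η b) :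
    ∫ τ in Icc a b, μ (η τ) * f τ = 0 := by
  have hηc : ContinuousOn η (Icc a b) := acDeriv_continuousOn hab hf hFTC
  have hg : IntegrableOn (fun τ => μ (η τ) * f τ) (Icc a b) :=
    mul_comp_integrableOn hf hηc hrange hμ
  -- interval integrability on subintervals
  have hsubf : ∀ {x y : ℝ}, x ∈ Icc a b → y ∈ Icc a b → IntervalIntegrable f volume x y := by
    intro x y hx hy
    apply MeasureTheory.IntegrableOn.intervalIntegrable
    apply hf.mono_set
    rw [← uIcc_of_le hab]
    exact uIcc_subset_uIcc (Icc_subset_uIcc hx) (Icc_subset_uIcc hy)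
  have hsubg : ∀ {x y : ℝ}, x ∈ Icc a b → y ∈ Icc a b →
      IntervalIntegrable (fun τ => μ (η τ) * f τ) volume x y := by
    intro x y hx hy
    apply MeasureTheory.IntegrableOn.intervalIntegrable
    apply hg.mono_set
    rw [← uIcc_of_le hab]
    exact uIcc_subset_uIcc (Icc_subset_uIcc hx) (Icc_subset_uIcc hy)
  have key : ∀ ε > (0:ℝ), |∫ τ in Icc a b, μ (η τ) * f τ| ≤ ε := by
    intro ε hε
    set I := ∫ τ in a..b, |f τ| with hIdef
    have hI0 : 0 ≤ I := intervalIntegral.integral_nonneg hab (fun τ _ => abs_nonneg _)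
    set ε' := ε / (2 * I + 1) with hε'def
    have h2I : (0:ℝ) < 2 * I + 1 := by linarith
    have hε' : 0 < ε' := div_pos hε h2I
    -- uniform continuity of μ on [0,1]
    obtain ⟨δ₁, hδ₁, hμδ⟩ := Metric.uniformContinuousOn_iff.1
      ((isCompact_Icc (a := (0:ℝ)) (b := 1)).uniformContinuousOn_of_continuous
        hμ.continuousOn) ε' hε'
    -- uniform continuity of η on [a,b]
    obtain ⟨δ₂, hδ₂, hηδ⟩ := Metric.uniformContinuousOn_iff.1
      (isCompact_Icc.uniformContinuousOn_of_continuous hηc) δ₁ hδ₁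
    obtain ⟨n₀, hn₀⟩ := exists_nat_gt ((b - a) / δ₂)
    set n := n₀ + 1 with hndef
    have hnR : (0:ℝ) < n := by exact_mod_cast Nat.succ_pos n₀
    have hmesh : (b - a) / n < δ₂ := by
      have h1 : (b - a) / δ₂ < (n : ℝ) := by
        calc (b - a) / δ₂ < (n₀ : ℝ) := hn₀
          _ ≤ (n : ℝ) := by exact_mod_cast Nat.le_succ n₀
      have h2 : b - a < (n : ℝ) * δ₂ := by
        rw [div_lt_iff₀ hδ₂] at h1; linarith
      rw [div_lt_iff₀ hnR]
      linarith [h2]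
    set t : ℕ → ℝ := fun i => a + i * ((b - a) / n) with htdef
    have ht0 : t 0 = a := by simp [htdef]
    have htn : t n = b := by
      simp only [htdef]
      field_simp
      ring
    have hstep : ∀ i : ℕ, t (i + 1) - t i = (b - a) / n := by
      intro i
      simp only [htdef]
      push_cast
      ring
    have hmono : ∀ i j : ℕ, i ≤ j → t i ≤ t j := by
      intro i j hij
      simp only [htdef]
      have : (i : ℝ) ≤ j := by exact_mod_cast hij
      have hq : 0 ≤ (b - a) / n := div_nonneg (by linarith) hnR.le
      nlinarith
    have htmem : ∀ i : ℕ, i ≤ n → t i ∈ Icc a b := by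
      intro i hi
      constructor
      · rw [← ht0]; exact hmono 0 i (Nat.zero_le _)
      · rw [← htn]; exact hmono i n hi
    -- piecewise estimate
    have hpiece : ∀ i < n,
        |(∫ τ in (t i)..(t (i+1)), μ (η τ) * f τ) - ∫ r in (η (t i))..(η (t (i+1))), μ r| ≤
          2 * ε' * ∫ τ in (t i)..(t (i+1)), |f τ| := by
      intro i hi
      have hx := htmem i hi.le
      have hy := htmem (i+1) hi
      have hxy : t i ≤ t (i+1) := hmono i (i+1) (Nat.le_succ _)
      have hyx : t (i+1) - t i < δ₂ := by rw [hstep i]; exact hmesh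
      have hηdiff : η (t (i+1)) - η (t i) = ∫ τ in (t i)..(t (i+1)), f τ := by
        rw [hFTC (t (i+1)) hy, hFTC (t i) hx]
        have := intervalIntegral.integral_interval_sub_left
          (hsubf (left_mem_Icc.2 hab) hy) (hsubf (left_mem_Icc.2 hab) hx)
        rw [← this]
        ring
      have hclose : ∀ τ ∈ Icc (t i) (t (i+1)), |η τ - η (t i)| < δ₁ := by
        intro τ hτ
        have hτab : τ ∈ Icc a b := ⟨hx.1.trans hτ.1, hτ.2.trans hy.2⟩
        have : dist τ (t i) < δ₂ := by
          rw [Real.dist_eq, abs_of_nonneg (by linarith [hτ.1])]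
          linarith [hτ.2]
        have := hηδ τ hτab (t i) hx this
        rwa [Real.dist_eq] at this
      have hμclose : ∀ τ ∈ Icc (t i) (t (i+1)), |μ (η τ) - μ (η (t i))| ≤ ε' := by
        intro τ hτ
        have hτab : τ ∈ Icc a b := ⟨hx.1.trans hτ.1, hτ.2.trans hy.2⟩
        have := hμδ (η τ) (hrange τ hτab) (η (t i)) (hrange (t i) hx)
          (by rw [Real.dist_eq]; exact hclose τ hτ)
        rw [Real.dist_eq] at this
        exact this.le
      have habsint : IntervalIntegrable (fun τ => |f τ|) volume (t i) (t (i+1)) :=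
        (hsubf hx hy).abs
      have hfabs : |∫ τ in (t i)..(t (i+1)), f τ| ≤ ∫ τ in (t i)..(t (i+1)), |f τ| := by
        have := intervalIntegral.norm_integral_le_integral_norm
          (f := f) (μ := volume) hxy
        simpa [Real.norm_eq_abs] using this
      have hintabs_nonneg : 0 ≤ ∫ τ in (t i)..(t (i+1)), |f τ| :=
        intervalIntegral.integral_nonneg hxy (fun τ _ => abs_nonneg _)
      -- A estimate
      have hA : |(∫ τ in (t i)..(t (i+1)), μ (η τ) * f τ) -
          μ (η (t i)) * ∫ τ in (t i)..(t (i+1)), f τ| ≤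
          ε' * ∫ τ in (t i)..(t (i+1)), |f τ| := by
        have e1 : μ (η (t i)) * (∫ τ in (t i)..(t (i+1)), f τ) =
            ∫ τ in (t i)..(t (i+1)), μ (η (t i)) * f τ :=
          (intervalIntegral.integral_const_mul _ _).symm
        rw [e1, ← intervalIntegral.integral_sub (hsubg hx hy) ((hsubf hx hy).const_mul _)]
        have e2 : ∀ τ, μ (η τ) * f τ - μ (η (t i)) * f τ = (μ (η τ) - μ (η (t i))) * f τ := by
          intro τ; ring
        simp only [e2]
        have hae : ∀ᵐ τ ∂(volume.restrict (Set.uIoc (t i) (t (i+1)))),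
            ‖(μ (η τ) - μ (η (t i))) * f τ‖ ≤ ε' * |f τ| := by
          rw [MeasureTheory.ae_restrict_iff' measurableSet_uIoc]
          apply MeasureTheory.ae_of_all
          intro τ hτ
          rw [uIoc_of_le hxy] at hτ
          have hτ' : τ ∈ Icc (t i) (t (i+1)) := ⟨hτ.1.le, hτ.2⟩
          rw [Real.norm_eq_abs, abs_mul]
          exact mul_le_mul_of_nonneg_right (hμclose τ hτ') (abs_nonneg _)
        have hb : ‖∫ τ in (t i)..(t (i+1)), (μ (η τ) - μ (η (t i))) * f τ‖ ≤
            abs (∫ τ in (t i)..(t (i+1)), ε' * |f τ|) :=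
          intervalIntegral.norm_integral_le_abs_of_norm_le hae (habsint.const_mul _)
        rw [Real.norm_eq_abs] at hb
        have heq : abs (∫ τ in (t i)..(t (i+1)), ε' * |f τ|) =
            ε' * ∫ τ in (t i)..(t (i+1)), |f τ| := by
          rw [intervalIntegral.integral_const_mul]
          exact abs_of_nonneg (mul_nonneg hε'.le hintabs_nonneg)
        rwa [heq] at hb
      -- B estimate
      have hηxy : |η (t (i+1)) - η (t i)| < δ₁ := hclose (t (i+1)) ⟨hxy, le_refl _⟩
      have hB : |(∫ r in (η (t i))..(η (t (i+1))), μ r) -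
          μ (η (t i)) * (η (t (i+1)) - η (t i))| ≤ ε' * |η (t (i+1)) - η (t i)| := by
        have e1 : μ (η (t i)) * (η (t (i+1)) - η (t i)) =
            ∫ _ in (η (t i))..(η (t (i+1))), μ (η (t i)) := by
          rw [intervalIntegral.integral_const, smul_eq_mul]; ring
        rw [e1, ← intervalIntegral.integral_sub (hμ.intervalIntegrable _ _)
          intervalIntegrable_const]
        have hb := intervalIntegral.norm_integral_le_of_norm_le_const
          (C := ε') (f := fun r => μ r - μ (η (t i)))
          (a := η (t i)) (b := η (t (i+1))) ?_
        · rwa [Real.norm_eq_abs] at hb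
        · intro r hr
          have hr' : r ∈ uIcc (η (t i)) (η (t (i+1))) := uIoc_subset_uIcc hr
          rw [mem_uIcc] at hr'
          have hr01 : r ∈ Icc (0:ℝ) 1 := by
            have h1 := hrange (t i) hx
            have h2 := hrange (t (i+1)) hy
            rcases hr' with ⟨ha1, ha2⟩ | ⟨ha1, ha2⟩
            · exact ⟨h1.1.trans ha1, ha2.trans h2.2⟩
            · exact ⟨h2.1.trans ha1, ha2.trans h1.2⟩
          have hrd : |r - η (t i)| < δ₁ := by
            rcases hr' with ⟨ha1, ha2⟩ | ⟨ha1, ha2⟩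
            · rw [abs_of_nonneg (by linarith)]
              calc r - η (t i) ≤ η (t (i+1)) - η (t i) := by linarith
                _ ≤ |η (t (i+1)) - η (t i)| := le_abs_self _
                _ < δ₁ := hηxy
            · rw [abs_of_nonpos (by linarith)]
              calc -(r - η (t i)) ≤ -(η (t (i+1)) - η (t i)) := by linarith
                _ ≤ |η (t (i+1)) - η (t i)| := neg_le_abs _
                _ < δ₁ := hηxy
          have := hμδ r hr01 (η (t i)) (hrange (t i) hx) (by rwa [Real.dist_eq])
          rw [Real.dist_eq] at this
          rw [Real.norm_eq_abs]
          exact this.le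
      have hηle : |η (t (i+1)) - η (t i)| ≤ ∫ τ in (t i)..(t (i+1)), |f τ| := by
        rw [hηdiff]; exact hfabs
      calc |(∫ τ in (t i)..(t (i+1)), μ (η τ) * f τ) -
            ∫ r in (η (t i))..(η (t (i+1))), μ r|
          ≤ |(∫ τ in (t i)..(t (i+1)), μ (η τ) * f τ) -
              μ (η (t i)) * ∫ τ in (t i)..(t (i+1)), f τ| +
            |μ (η (t i)) * (∫ τ in (t i)..(t (i+1)), f τ) -
              ∫ r in (η (t i))..(η (t (i+1))), μ r| := abs_sub_le _ _ _
        _ ≤ ε' * (∫ τ in (t i)..(t (i+1)), |f τ|) + ε' * (∫ τ in (t i)..(t (i+1)), |f τ|) := by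
            apply add_le_add hA
            rw [← hηdiff, abs_sub_comm]
            exact hB.trans (by
              apply mul_le_mul_of_nonneg_left hηle hε'.le)
        _ = 2 * ε' * ∫ τ in (t i)..(t (i+1)), |f τ| := by ring
    -- sum up
    have hsum1 : ∑ i ∈ Finset.range n, ∫ τ in (t i)..(t (i+1)), μ (η τ) * f τ =
        ∫ τ in a..b, μ (η τ) * f τ := by
      rw [intervalIntegral.sum_integral_adjacent_intervals
        (fun i hi => hsubg (htmem i hi.le) (htmem (i+1) hi))]
      rw [ht0, htn]
    have hsum2 : ∑ i ∈ Finset.range n, ∫ r in (η (t i))..(η (t (i+1))), μ r = 0 := by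
      rw [intervalIntegral.sum_integral_adjacent_intervals
        (fun i _ => hμ.intervalIntegrable _ _)]
      rw [ht0, htn, hend, intervalIntegral.integral_same]
    have hsum3 : ∑ i ∈ Finset.range n, ∫ τ in (t i)..(t (i+1)), |f τ| = I := by
      rw [intervalIntegral.sum_integral_adjacent_intervals
        (fun i hi => (hsubf (htmem i hi.le) (htmem (i+1) hi)).abs)]
      rw [ht0, htn]
    have hIcc_ab : ∫ τ in Icc a b, μ (η τ) * f τ = ∫ τ in a..b, μ (η τ) * f τ := by
      rw [intervalIntegral.integral_of_le hab, MeasureTheory.integral_Icc_eq_integral_Ioc]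
    rw [hIcc_ab, ← hsum1]
    have h1 : |∑ i ∈ Finset.range n, ∫ τ in (t i)..(t (i+1)), μ (η τ) * f τ| =
        |∑ i ∈ Finset.range n, ((∫ τ in (t i)..(t (i+1)), μ (η τ) * f τ) -
          ∫ r in (η (t i))..(η (t (i+1))), μ r)| := by
      rw [Finset.sum_sub_distrib, hsum2, sub_zero]
    rw [h1]
    calc |∑ i ∈ Finset.range n, ((∫ τ in (t i)..(t (i+1)), μ (η τ) * f τ) -
          ∫ r in (η (t i))..(η (t (i+1))), μ r)|
        ≤ ∑ i ∈ Finset.range n, |(∫ τ in (t i)..(t (i+1)), μ (η τ) * f τ) -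
          ∫ r in (η (t i))..(η (t (i+1))), μ r| := Finset.abs_sum_le_sum_abs _ _
      _ ≤ ∑ i ∈ Finset.range n, 2 * ε' * ∫ τ in (t i)..(t (i+1)), |f τ| :=
          Finset.sum_le_sum (fun i hi => hpiece i (Finset.mem_range.1 hi))
      _ = 2 * ε' * I := by rw [← Finset.mul_sum, hsum3]
      _ ≤ ε := by
          have hεeq : ε' * (2 * I + 1) = ε := div_mul_cancel₀ _ (ne_of_gt h2I)
          nlinarith
  have h0 : |∫ τ in Icc a b, μ (η τ) * f τ| ≤ 0 := by
    by_contra hcon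
    push_neg at hcon
    have := key (|∫ τ in Icc a b, μ (η τ) * f τ| / 2) (by linarith)
    linarith
  exact abs_eq_zero.1 (le_antisymm h0 (abs_nonneg _))

set_option maxHeartbeats 2000000 in
/-- Construction of a continuous approximate selection `μ` with `H(s, μ(s)) ≤ -c + ε`
and exact minimizers at the endpoints. -/
lemma exists_good_mu (hH : IsHamiltonian H) {c : ℝ} (hc : c ≤ cHam H) {ε : ℝ} (hε : 0 < ε) :
    ∃ μ : ℝ → ℝ, Continuous μ ∧ (∀ s ∈ Icc (0:ℝ) 1, H s (μ s) ≤ -c + ε) ∧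
      (∀ ν, H 0 (μ 0) ≤ H 0 ν) ∧ (∀ ν, H 1 (μ 1) ≤ H 1 ν) := by
  obtain ⟨R, hR0, hmin⟩ := exists_min hH
  obtain ⟨δ, hδ, hHδ⟩ := Metric.uniformContinuousOn_iff.1
    (((isCompact_Icc (a := (0:ℝ)) (b := 1)).prod
        (isCompact_Icc (a := -R) (b := R))).uniformContinuousOn_of_continuous
      (hH.cont.mono (prod_mono_right (subset_univ _)))) ε hε
  obtain ⟨n₀, hn₀⟩ := exists_nat_one_div_lt hδ
  set n := n₀ + 1 with hndef
  have hnpos : 0 < n := Nat.succ_pos _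
  have hnR : (0:ℝ) < n := by exact_mod_cast hnpos
  have hgrid : ∀ i : ℕ, i ≤ n → (i:ℝ)/n ∈ Icc (0:ℝ) 1 := by
    intro i hi
    constructor
    · positivity
    · rw [div_le_one hnR]; exact_mod_cast hi
  choose! m hmmem hmmin using fun (i : ℕ) (hi : i ≤ n) => hmin ((i:ℝ)/n) (hgrid i hi)
  set μf : ℝ → ℝ :=
    fun s => m 0 + ∑ i ∈ Finset.range n, (m (i+1) - m i) * (max 0 (min 1 (s * n - i)))
    with hμfdef
  have hcont : Continuous μf := by
    apply continuous_const.add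
    apply continuous_finset_sum
    intro i _
    apply continuous_const.mul
    apply continuous_const.max
    apply continuous_const.min
    continuity
  have hformula : ∀ j : ℕ, j < n → ∀ s : ℝ, (j:ℝ)/n ≤ s → s ≤ ((j:ℝ)+1)/n →
      μf s = m j + (s * n - j) * (m (j+1) - m j) := by
    intro j hj s hs1 hs2
    have hsn1 : (j:ℝ) ≤ s * n := by
      rw [div_le_iff₀ hnR] at hs1; linarith
    have hsn2 : s * n ≤ (j:ℝ) + 1 := by
      rw [le_div_iff₀ hnR] at hs2; linarith
    have hsplit : ∑ i ∈ Finset.range n, (m (i+1) - m i) * (max 0 (min 1 (s * n - i))) =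
        (∑ i ∈ Finset.range (j+1), (m (i+1) - m i) * (max 0 (min 1 (s * n - i)))) +
        ∑ i ∈ Finset.Ico (j+1) n, (m (i+1) - m i) * (max 0 (min 1 (s * n - i))) :=
      (Finset.sum_range_add_sum_Ico _ (Nat.succ_le_of_lt hj)).symm
    have hzero : ∑ i ∈ Finset.Ico (j+1) n, (m (i+1) - m i) * (max 0 (min 1 (s * n - i))) = 0 := by
      apply Finset.sum_eq_zero
      intro i hi
      rw [Finset.mem_Ico] at hi
      have : (j:ℝ) + 1 ≤ i := by exact_mod_cast hi.1
      have h1 : s * n - i ≤ 0 := by linarith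
      have h2 : min 1 (s * n - i) ≤ 0 := (min_le_right _ _).trans h1
      rw [max_eq_left h2, mul_zero]
    have hones : ∑ i ∈ Finset.range j, (m (i+1) - m i) * (max 0 (min 1 (s * n - i))) =
        m j - m 0 := by
      rw [← Finset.sum_range_sub m]
      apply Finset.sum_congr rfl
      intro i hi
      rw [Finset.mem_range] at hi
      have : (i:ℝ) + 1 ≤ j := by exact_mod_cast hi
      have h1 : (1:ℝ) ≤ s * n - i := by linarith
      rw [min_eq_left h1, max_eq_right zero_le_one, mul_one]
    have hθ1 : min 1 (s * n - j) = s * n - j := min_eq_right (by linarith)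
    have hθ2 : max 0 (s * n - j) = s * n - j := max_eq_right (by linarith)
    rw [hμfdef]
    simp only
    rw [hsplit, hzero, Finset.sum_range_succ, hones, hθ1, hθ2]
    ring
  have hμf0 : μf 0 = m 0 := by
    have := hformula 0 hnpos 0 (by simp) (by positivity)
    simpa using this
  have hμf1 : μf 1 = m n := by
    have h1 : ((n₀:ℝ))/n ≤ 1 := (hgrid n₀ (Nat.le_succ _)).2
    have h2 : (1:ℝ) ≤ ((n₀:ℝ)+1)/n := by
      have : ((n₀:ℝ)+1) = (n:ℝ) := by push_cast [hndef]; ring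
      rw [this, div_self (ne_of_gt hnR)]
    have := hformula n₀ (Nat.lt_succ_self _) 1 h1 h2
    rw [this]
    have hcast : (1:ℝ) * n - n₀ = 1 := by push_cast [hndef]; ring
    rw [hcast, hndef]
    ring_nf
  have hm0min : ∀ ν, H 0 (μf 0) ≤ H 0 ν := by
    intro ν
    have := hmmin 0 (Nat.zero_le _) ν
    rw [hμf0]
    simpa using this
  have hm1min : ∀ ν, H 1 (μf 1) ≤ H 1 ν := by
    intro ν
    have := hmmin n (le_refl _) ν
    rw [hμf1]
    rw [div_self (ne_of_gt hnR)] at this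
    exact this
  refine ⟨μf, hcont, ?_, hm0min, hm1min⟩
  intro s hs
  -- find the subinterval
  obtain ⟨j, hj, hs1, hs2⟩ : ∃ j : ℕ, j < n ∧ (j:ℝ)/n ≤ s ∧ s ≤ ((j:ℝ)+1)/n := by
    rcases eq_or_lt_of_le hs.2 with h1 | h1
    · refine ⟨n₀, Nat.lt_succ_self _, ?_, ?_⟩
      · rw [h1]; exact (hgrid n₀ (Nat.le_succ _)).2
      · have h2 : ((n₀:ℝ)+1) = (n:ℝ) := by push_cast [hndef]; ring
        rw [h1, h2, div_self (ne_of_gt hnR)]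
    · refine ⟨⌊s * n⌋₊, ?_, ?_, ?_⟩
      · rw [Nat.floor_lt (mul_nonneg hs.1 hnR.le)]
        calc s * n < 1 * n := by exact mul_lt_mul_of_pos_right h1 hnR
          _ = n := by ring
      · rw [div_le_iff₀ hnR]
        exact Nat.floor_le (mul_nonneg hs.1 hnR.le)
      · rw [le_div_iff₀ hnR]
        exact (Nat.lt_floor_add_one _).le
  have hjn : j ≤ n := hj.le
  have hj1n : j + 1 ≤ n := hj
  set θ := s * n - j with hθdef
  have hsn1 : (j:ℝ) ≤ s * n := by rw [div_le_iff₀ hnR] at hs1; linarith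
  have hsn2 : s * n ≤ (j:ℝ) + 1 := by rw [le_div_iff₀ hnR] at hs2; linarith
  have hθ0 : 0 ≤ θ := by rw [hθdef]; linarith
  have hθ1 : θ ≤ 1 := by rw [hθdef]; linarith
  have hform := hformula j hj s hs1 hs2
  have hcomb : μf s = (1-θ) • m j + θ • m (j+1) := by
    rw [hform, smul_eq_mul, smul_eq_mul, hθdef]; ring
  have hconv := (hH.convex s hs).2 (mem_univ (m j)) (mem_univ (m (j+1)))
    (by linarith : (0:ℝ) ≤ 1 - θ) hθ0 (by ring)
  rw [← hcomb] at hconv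
  simp only [smul_eq_mul] at hconv
  have hninv : 1/(n:ℝ) < δ := by
    have : ((n₀:ℝ)+1) = (n:ℝ) := by push_cast [hndef]; ring
    rwa [this] at hn₀
  have key : ∀ k : ℕ, k ≤ n → |s - (k:ℝ)/n| < δ → H s (m k) ≤ -c + ε := by
    intro k hk hdist
    have hmem := hmmem k hk
    have h1 := hHδ (s, m k) ⟨hs, hmem⟩ ((k:ℝ)/n, m k) ⟨hgrid k hk, hmem⟩ ?_
    · have h2 : H ((k:ℝ)/n) (m k) ≤ -c :=
        min_le_neg_c hH hc (hgrid k hk) (hmmin k hk)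
      rw [Real.dist_eq] at h1
      have := abs_lt.1 h1
      linarith [this.2]
    · rw [Prod.dist_eq]
      simp only [Real.dist_eq, sub_self, abs_zero]
      exact max_lt hdist hδ
  have hd1 : |s - (j:ℝ)/n| < δ := by
    have h1 : 0 ≤ s - (j:ℝ)/n := by linarith
    have h2 : s - (j:ℝ)/n ≤ 1/n := by
      have : ((j:ℝ)+1)/n = (j:ℝ)/n + 1/n := by ring
      rw [this] at hs2
      linarith
    rw [abs_of_nonneg h1]
    linarith
  have hd2 : |s - ((j:ℝ)+1)/n| < δ := by
    have heq : ((j:ℝ)+1)/n = (j:ℝ)/n + 1/n := by ring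
    have h1 : s - ((j:ℝ)+1)/n ≤ 0 := by linarith
    have h2 : -(1/(n:ℝ)) ≤ s - ((j:ℝ)+1)/n := by
      rw [heq]; linarith
    rw [abs_of_nonpos h1]
    linarith
  have hk1 := key j hjn hd1
  have hk2 : H s (m (j+1)) ≤ -c + ε := by
    apply key (j+1) hj1n
    have : ((j+1:ℕ):ℝ) = (j:ℝ) + 1 := by push_cast; ring
    rw [this]
    exact hd2
  nlinarith

/-- The core lower bound: `∫ L̄(η, η') ≥ c (b - a)` for closed curves. -/
lemma key_lower (hH : IsHamiltonian H) {c : ℝ} (hc : c ≤ cHam H) {a b : ℝ} (hab : a ≤ b)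
    {η η' : ℝ → ℝ} (hAC : IsACDerivOn a b η η')
    (hrange : ∀ t ∈ Icc a b, η t ∈ Icc (0:ℝ) 1) (hend : η a = η b)
    (hInt : IntegrableOn (fun τ => Lbar H c (η τ) (η' τ)) (Icc a b)) :
    c * (b - a) ≤ ∫ τ in Icc a b, Lbar H c (η τ) (η' τ) := by
  obtain ⟨hf, hFTC⟩ := hAC
  have hηc : ContinuousOn η (Icc a b) := acDeriv_continuousOn hab hf hFTC
  have hIccfin : volume (Icc a b) < ⊤ := by
    rw [Real.volume_Icc]; exact ENNReal.ofReal_lt_top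
  have hstep : ∀ ε > (0:ℝ),
      c * (b - a) ≤ (∫ τ in Icc a b, Lbar H c (η τ) (η' τ)) + ε * (b - a) := by
    intro ε hε
    obtain ⟨μ, hμc, hμmain, hμ0, hμ1⟩ := exists_good_mu hH hc hε
    have hzero := subst_zero hab hf hFTC hrange hμc hend
    have hg : IntegrableOn (fun τ => μ (η τ) * η' τ) (Icc a b) :=
      mul_comp_integrableOn hf hηc hrange hμc
    have hconst : IntegrableOn (fun _ : ℝ => c - ε) (Icc a b) :=
      integrableOn_const hIccfin.ne
    have hh : IntegrableOn (fun τ => (c - ε) + μ (η τ) * η' τ) (Icc a b) := hconst.add hg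
    have hmono : ∀ τ ∈ Icc a b, (c - ε) + μ (η τ) * η' τ ≤ Lbar H c (η τ) (η' τ) := by
      intro τ hτ
      have hsm := hrange τ hτ
      by_cases h01 : η τ = 0 ∨ η τ = 1
      · have hmin' : ∀ ν, H (η τ) (μ (η τ)) ≤ H (η τ) ν := by
          rcases h01 with h | h <;> rw [h]
          · exact hμ0
          · exact hμ1
        have h1 := le_lagr hH hsm (η' τ) (μ (η τ))
        have h2 := lagr_zero_le hH hmin'
        unfold Lbar
        rw [if_pos h01]
        linarith
      · have h1 := le_lagr hH hsm (η' τ) (μ (η τ))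
        have h2 := hμmain (η τ) hsm
        unfold Lbar
        rw [if_neg h01]
        linarith
    have hle := MeasureTheory.setIntegral_mono_on hh hInt measurableSet_Icc hmono
    rw [MeasureTheory.integral_add hconst hg, hzero, add_zero,
      MeasureTheory.setIntegral_const, measureReal_def, Real.volume_Icc,
      ENNReal.toReal_ofReal (by linarith : (0:ℝ) ≤ b - a), smul_eq_mul] at hle
    nlinarith
  rcases eq_or_lt_of_le hab with heq | hlt
  · have := hstep 1 one_pos
    rw [← heq] at this ⊢
    simp only [sub_self, mul_zero] at this ⊢
    linarith
  · apply le_of_forall_sub_le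
    intro ε hε
    have h1 := hstep (ε / (b - a)) (div_pos hε (by linarith))
    have h2 : (ε / (b - a)) * (b - a) = ε := div_mul_cancel₀ _ (ne_of_gt (by linarith))
    linarith

lemma eIntegral_eq (a b : ℝ) (f : ℝ → ℝ) (g : ℝ → EReal)
    (hg : ∀ τ, g τ = ((f τ : ℝ) : EReal)) :
    eIntegral a b g = if IntegrableOn f (Icc a b)
      then (((∫ τ in Icc a b, f τ) : ℝ) : EReal) else ⊤ := by
  unfold eIntegral
  have h1 : (fun τ => (g τ).toReal) = f := by
    funext τ; rw [hg τ, EReal.toReal_coe]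
  have h2 : ∀ᵐ τ ∂(volume.restrict (Icc a b)), g τ ≠ ⊤ ∧ g τ ≠ ⊥ := by
    apply MeasureTheory.ae_of_all
    intro τ
    rw [hg τ]
    exact ⟨EReal.coe_ne_top _, EReal.coe_ne_bot _⟩
  rw [h1]
  by_cases hInt : IntegrableOn f (Icc a b)
  · rw [if_pos ⟨hInt, h2⟩, if_pos hInt]
  · rw [if_neg (fun h => hInt h.1), if_neg hInt]

end Stmt3Aux

/-- Let `c ≤ c_H` and let `L̄` be the modified Lagrangian. Then for every
absolutely continuous curve `η : [a,b] → [0,1]` with `η(a) = η(b)`,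
`∫_a^b L(η,η̇) dτ ≥ ∫_a^b L̄(η,η̇) dτ ≥ c (b - a)` (integrals in the extended sense). -/
theorem stmt3 (H : ℝ → ℝ → ℝ) (hH : IsHamiltonian H) (c : ℝ) (hc : c ≤ cHam H)
    (a b : ℝ) (hab : a ≤ b) (η η' : ℝ → ℝ) (hAC : IsACDerivOn a b η η')
    (hrange : ∀ t ∈ Icc a b, η t ∈ Icc (0:ℝ) 1) (hend : η a = η b) :
    eIntegral a b (fun τ => ((Lagr H (η τ) (η' τ) : ℝ) : EReal)) ≥
      eIntegral a b (fun τ => ((Lbar H c (η τ) (η' τ) : ℝ) : EReal)) ∧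
    eIntegral a b (fun τ => ((Lbar H c (η τ) (η' τ) : ℝ) : EReal)) ≥
      ((c * (b - a) : ℝ) : EReal) := by
  obtain ⟨hf, hFTC⟩ := hAC
  have hηc : ContinuousOn η (Icc a b) := acDeriv_continuousOn hab hf hFTC
  have hIccfin : volume (Icc a b) < ⊤ := by
    rw [Real.volume_Icc]; exact ENNReal.ofReal_lt_top
  rw [eIntegral_eq a b (fun τ => Lagr H (η τ) (η' τ)) _ (fun τ => rfl),
    eIntegral_eq a b (fun τ => Lbar H c (η τ) (η' τ)) _ (fun τ => rfl)]
  set d : ℝ → ℝ := fun τ =>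
    if η τ = 0 then c - Lagr H 0 0 else if η τ = 1 then c - Lagr H 1 0 else 0 with hddef
  have hGF : ∀ τ, Lbar H c (η τ) (η' τ) = Lagr H (η τ) (η' τ) + d τ := by
    intro τ
    unfold Lbar
    simp only [hddef]
    by_cases h0 : η τ = 0
    · rw [if_pos (Or.inl h0), if_pos h0, h0]; ring
    · by_cases h1 : η τ = 1
      · rw [if_pos (Or.inr h1), if_neg h0, if_pos h1, h1]; ring
      · rw [if_neg (by tauto), if_neg h0, if_neg h1]; ring
  have hd_int : IntegrableOn d (Icc a b) := by
    have hmeas : AEMeasurable η (volume.restrict (Icc a b)) :=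
      hηc.aemeasurable measurableSet_Icc
    have hgm : Measurable (fun x : ℝ =>
        if x = 0 then c - Lagr H 0 0 else if x = 1 then c - Lagr H 1 0 else 0) := by
      apply Measurable.ite
      · exact measurableSet_eq
      · exact measurable_const
      · apply Measurable.ite
        · exact measurableSet_eq
        · exact measurable_const
        · exact measurable_const
    have hdm : AEStronglyMeasurable d (volume.restrict (Icc a b)) :=
      (hgm.comp_aemeasurable hmeas).aestronglyMeasurable
    apply MeasureTheory.Integrable.mono'
      (g := fun _ : ℝ => max |c - Lagr H 0 0| |c - Lagr H 1 0|)
      (integrableOn_const hIccfin.ne) hdm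
    apply MeasureTheory.ae_of_all
    intro τ
    rw [Real.norm_eq_abs]
    simp only [hddef]
    split_ifs
    · exact le_max_left _ _
    · exact le_max_right _ _
    · simp only [abs_zero]
      exact le_trans (abs_nonneg _) (le_max_left _ _)
  have hd_nonpos : ∀ τ, d τ ≤ 0 := by
    intro τ
    have h0 := c_le_lagr_zero hH hc (⟨le_refl _, zero_le_one⟩ : (0:ℝ) ∈ Icc (0:ℝ) 1)
    have h1 := c_le_lagr_zero hH hc (⟨zero_le_one, le_refl _⟩ : (1:ℝ) ∈ Icc (0:ℝ) 1)
    simp only [hddef]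
    split_ifs <;> simp <;> linarith
  constructor
  · -- Part 1
    by_cases hFi : IntegrableOn (fun τ => Lagr H (η τ) (η' τ)) (Icc a b)
    · have heq : (fun τ => Lbar H c (η τ) (η' τ)) =
          fun τ => Lagr H (η τ) (η' τ) + d τ := funext hGF
      have hGi : IntegrableOn (fun τ => Lbar H c (η τ) (η' τ)) (Icc a b) := by
        rw [heq]; exact hFi.add hd_int
      rw [if_pos hFi, if_pos hGi, ge_iff_le, EReal.coe_le_coe_iff]
      have hsum : ∫ τ in Icc a b, Lbar H c (η τ) (η' τ) =
          (∫ τ in Icc a b, Lagr H (η τ) (η' τ)) + ∫ τ in Icc a b, d τ := by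
        rw [heq]
        exact MeasureTheory.integral_add hFi hd_int
      have hneg : ∫ τ in Icc a b, d τ ≤ 0 :=
        MeasureTheory.integral_nonpos (fun τ => hd_nonpos τ)
      linarith
    · rw [if_neg hFi]
      exact le_top
  · -- Part 2
    by_cases hGi : IntegrableOn (fun τ => Lbar H c (η τ) (η' τ)) (Icc a b)
    · rw [if_pos hGi, ge_iff_le, EReal.coe_le_coe_iff]
      exact key_lower hH hc hab ⟨hf, hFTC⟩ hrange hend hGi
    · rw [if_neg hGi]
      exact le_top
end
end

section
/- Let Γ ⊂ ℝ^N be an embedded network with a Hamiltonian (H_γ) and a flux limiter (c_x). Then the Lagrangian L : ℝ^N×ℝ^N → ℝ ∪ {+∞} is lower semicontinuous. -/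
open Set MeasureTheory Filter Topology
open scoped Classical

noncomputable section AuxStmt6

open Filter

namespace Stmt6Aux

lemma bddBelow_range_ham {H : ℝ → ℝ → ℝ} (hH : IsHamiltonian H) {s : ℝ}
    (hs : s ∈ Icc (0:ℝ) 1) : BddBelow (range fun μ => H s μ) := by
  obtain ⟨R, hR⟩ := hH.superlinear 0
  have hK : IsCompact (Icc (0:ℝ) 1 ×ˢ Icc (-|R|) |R|) := isCompact_Icc.prod isCompact_Icc
  have hco : ContinuousOn (fun p : ℝ × ℝ => H p.1 p.2) (Icc 0 1 ×ˢ Icc (-|R|) |R|) :=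
    hH.cont.mono (fun p hp => ⟨hp.1, mem_univ _⟩)
  obtain ⟨m, hm⟩ := hK.bddBelow_image hco
  refine ⟨min m 0, ?_⟩
  rintro v ⟨μ, rfl⟩
  by_cases hμ : |μ| ≤ |R|
  · have : m ≤ H s μ := hm ⟨(s, μ), ⟨hs, abs_le.mp hμ⟩, rfl⟩
    exact le_trans (min_le_left _ _) this
  · have h0 := hR s hs μ (le_trans (le_abs_self R) (not_le.mp hμ).le)
    simp only [zero_mul] at h0
    exact le_trans (min_le_right _ _) h0

lemma bddAbove_lagr {H : ℝ → ℝ → ℝ} (hH : IsHamiltonian H) {s : ℝ}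
    (hs : s ∈ Icc (0:ℝ) 1) (lam : ℝ) :
    BddAbove (range fun μ => lam * μ - H s μ) := by
  obtain ⟨R, hR⟩ := hH.superlinear |lam|
  have hK : IsCompact (Icc (0:ℝ) 1 ×ˢ Icc (-|R|) |R|) := isCompact_Icc.prod isCompact_Icc
  have hco : ContinuousOn (fun p : ℝ × ℝ => H p.1 p.2) (Icc 0 1 ×ˢ Icc (-|R|) |R|) :=
    hH.cont.mono (fun p hp => ⟨hp.1, mem_univ _⟩)
  obtain ⟨m, hm⟩ := hK.bddBelow_image hco
  refine ⟨max 0 (|lam| * |R| - m), ?_⟩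
  rintro v ⟨μ, rfl⟩
  show lam * μ - H s μ ≤ max 0 (|lam| * |R| - m)
  by_cases hμ : |μ| ≤ |R|
  · have h1 : lam * μ ≤ |lam| * |R| := by
      calc lam * μ ≤ |lam * μ| := le_abs_self _
        _ = |lam| * |μ| := abs_mul _ _
        _ ≤ |lam| * |R| := by
            exact mul_le_mul_of_nonneg_left hμ (abs_nonneg _)
    have h2 : m ≤ H s μ := hm ⟨(s, μ), ⟨hs, abs_le.mp hμ⟩, rfl⟩
    exact le_max_of_le_right (by linarith)
  · have h0 := hR s hs μ (le_trans (le_abs_self R) (not_le.mp hμ).le)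
    have h1 : lam * μ ≤ |lam| * |μ| := by
      calc lam * μ ≤ |lam * μ| := le_abs_self _
        _ = |lam| * |μ| := abs_mul _ _
    exact le_max_of_le_left (by linarith)

lemma le_lagr {H : ℝ → ℝ → ℝ} (hH : IsHamiltonian H) {s : ℝ}
    (hs : s ∈ Icc (0:ℝ) 1) (lam μ : ℝ) : lam * μ - H s μ ≤ Lagr H s lam :=
  le_csSup (bddAbove_lagr hH hs lam) ⟨μ, rfl⟩

lemma cHam_le_lagr {H : ℝ → ℝ → ℝ} (hH : IsHamiltonian H) : cHam H ≤ Lagr H 1 0 := by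
  have h1mem : (1:ℝ) ∈ Icc (0:ℝ) 1 := ⟨zero_le_one, le_refl 1⟩
  have h1 : ∀ μ, -H 1 μ ≤ Lagr H 1 0 := fun μ => by
    have := le_lagr hH h1mem 0 μ
    simpa using this
  have h2 : -Lagr H 1 0 ≤ sInf (range fun μ => H 1 μ) := by
    apply le_csInf (range_nonempty _)
    rintro v ⟨μ, rfl⟩
    linarith [h1 μ]
  have hbdd : BddAbove ((fun s => sInf (range fun μ => H s μ)) '' Icc 0 1) := by
    have hcont : ContinuousOn (fun s : ℝ => H s 0) (Icc 0 1) := by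
      have : ContinuousOn (fun s : ℝ => (s, (0:ℝ))) (Icc 0 1) :=
        (continuous_id.prodMk continuous_const).continuousOn
      exact hH.cont.comp this (fun s hs => ⟨hs, mem_univ _⟩)
    obtain ⟨M, hM⟩ := isCompact_Icc.bddAbove_image hcont
    refine ⟨M, ?_⟩
    rintro v ⟨s, hs, rfl⟩
    exact le_trans (csInf_le (bddBelow_range_ham hH hs) ⟨0, rfl⟩) (hM ⟨s, hs, rfl⟩)
  have h3 : sInf (range fun μ => H 1 μ) ≤
      sSup ((fun s => sInf (range fun μ => H s μ)) '' Icc 0 1) :=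
    le_csSup hbdd ⟨1, h1mem, rfl⟩
  unfold cHam
  linarith

lemma lagr_lsc_seq {H : ℝ → ℝ → ℝ} (hH : IsHamiltonian H) {r sl Ll : ℝ}
    (hsl : sl ∈ Icc (0:ℝ) 1) {sk Lk : ℕ → ℝ} (hmem : ∀ k, sk k ∈ Icc (0:ℝ) 1)
    (hs : Tendsto sk atTop (𝓝 sl)) (hL : Tendsto Lk atTop (𝓝 Ll))
    (hr : r < Lagr H sl Ll) : ∀ᶠ k in atTop, r < Lagr H (sk k) (Lk k) := by
  obtain ⟨v, ⟨μ, rfl⟩, hv⟩ := exists_lt_of_lt_csSup (range_nonempty _) hr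
  have hcw : ContinuousWithinAt (fun p : ℝ × ℝ => H p.1 p.2) (Icc 0 1 ×ˢ univ) (sl, μ) :=
    hH.cont _ ⟨hsl, mem_univ _⟩
  have htd : Tendsto (fun k => (sk k, μ)) atTop (𝓝[Icc 0 1 ×ˢ univ] (sl, μ)) := by
    rw [tendsto_nhdsWithin_iff]
    exact ⟨hs.prodMk_nhds tendsto_const_nhds,
      Eventually.of_forall fun k => ⟨hmem k, mem_univ _⟩⟩
  have hHk : Tendsto (fun k => H (sk k) μ) atTop (𝓝 (H sl μ)) := hcw.tendsto.comp htd
  have hgk : Tendsto (fun k => Lk k * μ - H (sk k) μ) atTop (𝓝 (Ll * μ - H sl μ)) :=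
    (hL.mul_const μ).sub hHk
  filter_upwards [hgk.eventually_const_lt hv, hs.eventually (by exact Eventually.of_forall (fun _ => True.intro))] with k hk _
  exact lt_of_lt_of_le hk (le_lagr hH (hmem k) (Lk k) μ)

lemma no_seq {H : ℝ → ℝ → ℝ} (hH : IsHamiltonian H) {r sl Ll : ℝ}
    (hsl : sl ∈ Icc (0:ℝ) 1) {sk Lk : ℕ → ℝ} (hmem : ∀ k, sk k ∈ Icc (0:ℝ) 1)
    (hs : Tendsto sk atTop (𝓝 sl)) (hL : Tendsto Lk atTop (𝓝 Ll))
    (hle : ∀ k, Lagr H (sk k) (Lk k) ≤ r) (hr : r < Lagr H sl Ll) : False := by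
  obtain ⟨k, hk⟩ := (lagr_lsc_seq hH hsl hmem hs hL hr).exists
  exact absurd (hle k) (not_le.mpr hk)

lemma lagr_flip {H H' : ℝ → ℝ → ℝ} (hc : ∀ s ∈ Icc (0:ℝ) 1, ∀ μ, H' s μ = H (1-s) (-μ))
    {σ : ℝ} (hσ : σ ∈ Icc (0:ℝ) 1) (κ : ℝ) : Lagr H' σ κ = Lagr H (1-σ) (-κ) := by
  unfold Lagr
  congr 1
  ext v
  simp only [mem_range]
  constructor
  · rintro ⟨μ, rfl⟩
    exact ⟨-μ, by rw [hc σ hσ μ]; ring⟩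
  · rintro ⟨μ, rfl⟩
    refine ⟨-μ, ?_⟩
    rw [hc σ hσ (-μ), neg_neg]
    ring

end Stmt6Aux

end AuxStmt6

namespace Stmt6Aux

lemma freq_exists_of_finite {ι α : Type*} {l : Filter α} {S : Set ι} (hS : S.Finite)
    {P : ι → α → Prop} (h : ∃ᶠ a in l, ∃ i ∈ S, P i a) : ∃ i ∈ S, ∃ᶠ a in l, P i a := by
  by_contra hcon
  push_neg at hcon
  have hev : ∀ᶠ a in l, ∀ i ∈ S, ¬ P i a :=
    (Filter.eventually_all_finite hS).2 fun i hi => (hcon i hi)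
  obtain ⟨a, ⟨i, hi, hPi⟩, hall⟩ := (h.and_eventually hev).exists
  exact hall i hi hPi

lemma inner_smul_div {N : ℕ} {q d : EucN N} {lam : ℝ} (hd : d ≠ 0) (h : q = lam • d) :
    (inner ℝ q d : ℝ) / ‖d‖ ^ 2 = lam := by
  subst h
  rw [real_inner_smul_left, real_inner_self_eq_norm_sq]
  exact mul_div_cancel_right₀ lam (pow_ne_zero 2 (norm_ne_zero_iff.mpr hd))

lemma inv_deriv {N : ℕ} {γ γ' : Arc N} (h : Arc.IsInverse γ γ') {σ : ℝ}
    (hσ : σ ∈ Icc (0:ℝ) 1) : γ'.deriv σ = - γ.deriv (1 - σ) := by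
  have h1σ : (1:ℝ) - σ ∈ Icc (0:ℝ) 1 := ⟨by linarith [hσ.2], by linarith [hσ.1]⟩
  have hsub : HasDerivWithinAt (fun t : ℝ => 1 - t) (-1 : ℝ) (Icc 0 1) σ := by
    simpa using (hasDerivWithinAt_id σ (Icc (0:ℝ) 1)).const_sub 1
  have hmaps : MapsTo (fun t : ℝ => 1 - t) (Icc (0:ℝ) 1) (Icc (0:ℝ) 1) := by
    intro t ht
    exact ⟨by simp only []; linarith [ht.2], by simp only []; linarith [ht.1]⟩
  have hg : HasDerivWithinAt (γ.toFun ∘ fun t : ℝ => 1 - t)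
      ((-1 : ℝ) • γ.deriv (1 - σ)) (Icc 0 1) σ :=
    (γ.hasDeriv (1 - σ) h1σ).scomp σ hsub hmaps
  have hg' : HasDerivWithinAt γ'.toFun ((-1 : ℝ) • γ.deriv (1 - σ)) (Icc 0 1) σ :=
    hg.congr (fun t ht => h t ht) (h σ hσ)
  have hu : UniqueDiffWithinAt ℝ (Icc (0:ℝ) 1) σ := (uniqueDiffOn_Icc one_pos) σ hσ
  have e1 := (γ'.hasDeriv σ hσ).derivWithin hu
  have e2 := hg'.derivWithin hu
  rw [← e1, e2]
  simp

lemma V_finite {N : ℕ} (Γ : EmbNetwork N) : Γ.V.Finite := by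
  apply Set.Finite.subset (Γ.finite.biUnion
    (fun γ _ => (Set.finite_singleton (γ.toFun 1)).insert (γ.toFun 0)))
  rintro x ⟨γ, hγ, h | h⟩
  · exact Set.mem_biUnion hγ (by simp [h.symm])
  · exact Set.mem_biUnion hγ (by simp [h.symm])

lemma sint_finite {N : ℕ} (Γ : EmbNetwork N) (H : Arc N → ℝ → ℝ → ℝ) (x q : EucN N) :
    {v : ℝ | ∃ γ ∈ Γ.arcs, ∃ s ∈ Ioo (0:ℝ) 1, γ.toFun s = x ∧
      (∃ lam : ℝ, q = lam • γ.deriv s) ∧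
      v = Lagr (H γ) s ((inner ℝ q (γ.deriv s) : ℝ) / ‖γ.deriv s‖ ^ 2)}.Finite := by
  have hsub : {v : ℝ | ∃ γ ∈ Γ.arcs, ∃ s ∈ Ioo (0:ℝ) 1, γ.toFun s = x ∧
      (∃ lam : ℝ, q = lam • γ.deriv s) ∧
      v = Lagr (H γ) s ((inner ℝ q (γ.deriv s) : ℝ) / ‖γ.deriv s‖ ^ 2)} ⊆
      ⋃ γ ∈ Γ.arcs, {v : ℝ | ∃ s ∈ Ioo (0:ℝ) 1, γ.toFun s = x ∧
        (∃ lam : ℝ, q = lam • γ.deriv s) ∧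
        v = Lagr (H γ) s ((inner ℝ q (γ.deriv s) : ℝ) / ‖γ.deriv s‖ ^ 2)} := by
    rintro v ⟨γ, hγ, hrest⟩
    exact Set.mem_biUnion hγ hrest
  refine Set.Finite.subset (Set.Finite.biUnion Γ.finite fun γ hγ => ?_) hsub
  apply Set.Subsingleton.finite
  rintro v ⟨s, hs, hsx, -, rfl⟩ v' ⟨s', hs', hs'x, -, rfl⟩
  have hss : s = s' := γ.injOn (Ioo_subset_Icc_self hs) (Ioo_subset_Icc_self hs')
    (hsx.trans hs'x.symm)
  rw [hss]

lemma svert_finite {N : ℕ} (Γ : EmbNetwork N) (H : Arc N → ℝ → ℝ → ℝ) (x q : EucN N) :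
    {v : ℝ | ∃ γ ∈ Γ.arcs, γ.toFun 1 = x ∧ (∃ lam : ℝ, q = lam • γ.deriv 1) ∧
      v = Lagr (H γ) 1 ((inner ℝ q (γ.deriv 1) : ℝ) / ‖γ.deriv 1‖ ^ 2)}.Finite := by
  apply Set.Finite.subset (Γ.finite.image
    (fun γ => Lagr (H γ) 1 ((inner ℝ q (γ.deriv 1) : ℝ) / ‖γ.deriv 1‖ ^ 2)))
  rintro v ⟨γ, hγ, -, -, rfl⟩
  exact ⟨γ, hγ, rfl⟩

lemma eLag_vertex_zero {N : ℕ} (Γ : EmbNetwork N) (H : Arc N → ℝ → ℝ → ℝ) (c : EucN N → ℝ)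
    {x : EucN N} (hx : x ∈ Γ.V) : eLag Γ H c x 0 = ((c x : ℝ) : EReal) := by
  unfold eLag
  rw [if_pos hx, if_pos rfl]

lemma eLag_le_interior {N : ℕ} (Γ : EmbNetwork N) (H : Arc N → ℝ → ℝ → ℝ) (c : EucN N → ℝ)
    {x q : EucN N} (hx : x ∉ Γ.V) {γ : Arc N} (hγ : γ ∈ Γ.arcs) {s : ℝ}
    (hs : s ∈ Ioo (0:ℝ) 1) (hsx : γ.toFun s = x) (lam : ℝ) (hlam : q = lam • γ.deriv s) :
    eLag Γ H c x q ≤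
      ((Lagr (H γ) s ((inner ℝ q (γ.deriv s) : ℝ) / ‖γ.deriv s‖ ^ 2) : ℝ) : EReal) := by
  unfold eLag
  rw [if_neg hx, if_pos ⟨γ, hγ, s, hs, hsx, lam, hlam⟩]
  exact EReal.coe_le_coe_iff.mpr (csInf_le (sint_finite Γ H x q).bddBelow
    ⟨γ, hγ, s, hs, hsx, ⟨lam, hlam⟩, rfl⟩)

lemma eLag_le_vertex {N : ℕ} (Γ : EmbNetwork N) (H : Arc N → ℝ → ℝ → ℝ) (c : EucN N → ℝ)
    {x q : EucN N} (hx : x ∈ Γ.V) (hq : q ≠ 0) {γ : Arc N} (hγ : γ ∈ Γ.arcs)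
    (hγ1 : γ.toFun 1 = x) (lam : ℝ) (hlam : q = lam • γ.deriv 1) :
    eLag Γ H c x q ≤
      ((Lagr (H γ) 1 ((inner ℝ q (γ.deriv 1) : ℝ) / ‖γ.deriv 1‖ ^ 2) : ℝ) : EReal) := by
  unfold eLag
  rw [if_pos hx, if_neg hq, if_pos ⟨γ, hγ, hγ1, lam, hlam⟩]
  exact EReal.coe_le_coe_iff.mpr (csInf_le (svert_finite Γ H x q).bddBelow
    ⟨γ, hγ, hγ1, ⟨lam, hlam⟩, rfl⟩)

lemma cases_of_le {N : ℕ} (Γ : EmbNetwork N) (H : Arc N → ℝ → ℝ → ℝ) (c : EucN N → ℝ)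
    (r : ℝ) (x q : EucN N) (hn : eLag Γ H c x q ≤ ((r : ℝ) : EReal)) :
    (x ∈ Γ.V ∧ q = 0 ∧ c x ≤ r) ∨
    ∃ γ ∈ Γ.arcs, ∃ s ∈ Icc (0:ℝ) 1, γ.toFun s = x ∧
      (∃ lam : ℝ, q = lam • γ.deriv s) ∧
      Lagr (H γ) s ((inner ℝ q (γ.deriv s) : ℝ) / ‖γ.deriv s‖ ^ 2) ≤ r := by
  unfold eLag at hn
  split_ifs at hn with h1 h2 h3 h4
  · exact Or.inl ⟨h1, h2, EReal.coe_le_coe_iff.mp hn⟩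
  · -- vertex, q ≠ 0, tangent
    right
    obtain ⟨γ₀, hγ₀, hx₀, lam₀, hlam₀⟩ := h3
    have hne : {v : ℝ | ∃ γ ∈ Γ.arcs, γ.toFun 1 = x ∧ (∃ lam : ℝ, q = lam • γ.deriv 1) ∧
        v = Lagr (H γ) 1 ((inner ℝ q (γ.deriv 1) : ℝ) / ‖γ.deriv 1‖ ^ 2)}.Nonempty :=
      ⟨_, γ₀, hγ₀, hx₀, ⟨lam₀, hlam₀⟩, rfl⟩
    obtain ⟨γ, hγ, hx1, hlam, hv⟩ := hne.csInf_mem (svert_finite Γ H x q)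
    exact ⟨γ, hγ, 1, ⟨zero_le_one, le_refl 1⟩, hx1, hlam,
      hv ▸ EReal.coe_le_coe_iff.mp hn⟩
  · exact absurd hn (by simp)
  · right
    obtain ⟨γ₀, hγ₀, s₀, hs₀, hx₀, lam₀, hlam₀⟩ := h4
    have hne : {v : ℝ | ∃ γ ∈ Γ.arcs, ∃ s ∈ Ioo (0:ℝ) 1, γ.toFun s = x ∧
        (∃ lam : ℝ, q = lam • γ.deriv s) ∧
        v = Lagr (H γ) s ((inner ℝ q (γ.deriv s) : ℝ) / ‖γ.deriv s‖ ^ 2)}.Nonempty :=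
      ⟨_, γ₀, hγ₀, s₀, hs₀, hx₀, ⟨lam₀, hlam₀⟩, rfl⟩
    obtain ⟨γ, hγ, s, hs, hsx, hlam, hv⟩ := hne.csInf_mem (sint_finite Γ H x q)
    exact ⟨γ, hγ, s, Ioo_subset_Icc_self hs, hsx, hlam, hv ▸ EReal.coe_le_coe_iff.mp hn⟩
  · exact absurd hn (by simp)

end Stmt6Aux
/-- The Lagrangian `L : ℝ^N × ℝ^N → ℝ ∪ {+∞}` on the network associated to
the Hamiltonian `H` and the flux limiter `c` is lower semicontinuous. -/
theorem stmt6 {N : ℕ} (Γ : EmbNetwork N) (H : Arc N → ℝ → ℝ → ℝ)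
    (hH : IsNetworkHamiltonian Γ H) (c : EucN N → ℝ) (hc : IsFluxLimiter Γ H c) :
    LowerSemicontinuous (fun p : EucN N × EucN N => eLag Γ H c p.1 p.2) := by
  classical
  intro p y hy
  by_contra hcon
  rw [Filter.not_eventually] at hcon
  obtain ⟨r, hyr, hrf⟩ := EReal.lt_iff_exists_real_btwn.mp hy
  simp only [] at hrf
  have hcon' : ∃ᶠ p' in 𝓝 p, eLag Γ H c p'.1 p'.2 ≤ ((r : ℝ) : EReal) :=
    hcon.mono fun p' h => (not_lt.mp h).trans hyr.le
  obtain ⟨u, hu, hur⟩ := Filter.exists_seq_forall_of_frequently hcon'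
  have hx : Filter.Tendsto (fun n => (u n).1) Filter.atTop (𝓝 p.1) :=
    (continuous_fst.tendsto p).comp hu
  have hq : Filter.Tendsto (fun n => (u n).2) Filter.atTop (𝓝 p.2) :=
    (continuous_snd.tendsto p).comp hu
  have hcase : ∀ n, ((u n).1 ∈ Γ.V ∧ (u n).2 = 0 ∧ c (u n).1 ≤ r) ∨
      ∃ γ ∈ Γ.arcs, ∃ s ∈ Icc (0:ℝ) 1, γ.toFun s = (u n).1 ∧
        (∃ lam : ℝ, (u n).2 = lam • γ.deriv s) ∧
        Lagr (H γ) s ((inner ℝ (u n).2 (γ.deriv s) : ℝ) / ‖γ.deriv s‖ ^ 2) ≤ r :=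
    fun n => Stmt6Aux.cases_of_le Γ H c r (u n).1 (u n).2 (hur n)
  by_cases hQ : ∃ᶠ n in Filter.atTop, ((u n).1 ∈ Γ.V ∧ (u n).2 = 0 ∧ c (u n).1 ≤ r)
  · -- limit is a vertex with q = 0
    have hQ' : ∃ᶠ n in Filter.atTop, ∃ x₀ ∈ Γ.V,
        ((u n).1 = x₀ ∧ (u n).2 = 0 ∧ c x₀ ≤ r) :=
      hQ.mono fun n hn => ⟨(u n).1, hn.1, rfl, hn.2⟩
    obtain ⟨x₀, hx₀V, hfreq⟩ := Stmt6Aux.freq_exists_of_finite (Stmt6Aux.V_finite Γ) hQ'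
    have hp1 : p.1 = x₀ :=
      (tendsto_nhds_unique_of_frequently_eq hx tendsto_const_nhds
        (hfreq.mono fun n h => h.1))
    have hp2 : p.2 = 0 :=
      (tendsto_nhds_unique_of_frequently_eq hq tendsto_const_nhds
        (hfreq.mono fun n h => h.2.1))
    obtain ⟨n, hn⟩ := hfreq.exists
    have : ((r : ℝ) : EReal) < ((c x₀ : ℝ) : EReal) := by
      rw [hp1, hp2] at hrf
      rwa [Stmt6Aux.eLag_vertex_zero Γ H c hx₀V] at hrf
    exact absurd hn.2.2 (not_le.mpr (EReal.coe_lt_coe_iff.mp this))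
  · -- limit along a fixed arc
    have hPfreq : ∃ᶠ n in Filter.atTop, ∃ γ ∈ Γ.arcs, ∃ s ∈ Icc (0:ℝ) 1,
        γ.toFun s = (u n).1 ∧ (∃ lam : ℝ, (u n).2 = lam • γ.deriv s) ∧
        Lagr (H γ) s ((inner ℝ (u n).2 (γ.deriv s) : ℝ) / ‖γ.deriv s‖ ^ 2) ≤ r :=
      ((Filter.not_frequently.mp hQ).mono fun n hn => (hcase n).resolve_left hn).frequently
    obtain ⟨γ, hγ, hfreq⟩ := Stmt6Aux.freq_exists_of_finite Γ.finite hPfreq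
    obtain ⟨φ, hφmono, hφ⟩ := Filter.extraction_of_frequently_atTop hfreq
    choose s hsmem hsx hlamex hLag using hφ
    obtain ⟨sl, hsl, ψ, hψ, hsψ⟩ := isCompact_Icc.tendsto_subseq hsmem
    -- reindexed sequences
    set w : ℕ → EucN N × EucN N := fun k => u (φ (ψ k)) with hw
    have hwten : Filter.Tendsto w Filter.atTop (𝓝 p) :=
      hu.comp ((hφmono.comp hψ).tendsto_atTop)
    have hwx : Filter.Tendsto (fun k => (w k).1) Filter.atTop (𝓝 p.1) :=
      (continuous_fst.tendsto p).comp hwten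
    have hwq : Filter.Tendsto (fun k => (w k).2) Filter.atTop (𝓝 p.2) :=
      (continuous_snd.tendsto p).comp hwten
    have hsmem' : ∀ k, s (ψ k) ∈ Icc (0:ℝ) 1 := fun k => hsmem (ψ k)
    have hsten : Filter.Tendsto (fun k => s (ψ k)) Filter.atTop (𝓝[Icc 0 1] sl) :=
      tendsto_nhdsWithin_iff.mpr ⟨hsψ, Filter.Eventually.of_forall hsmem'⟩
    have hγcont : ContinuousOn γ.toFun (Icc 0 1) :=
      fun t ht => (γ.hasDeriv t ht).continuousWithinAt
    have hγsl : γ.toFun sl = p.1 := by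
      have h1 : Filter.Tendsto (fun k => γ.toFun (s (ψ k))) Filter.atTop
          (𝓝 (γ.toFun sl)) := (hγcont sl hsl).tendsto.comp hsten
      have h2 : (fun k => γ.toFun (s (ψ k))) = fun k => (w k).1 :=
        funext fun k => hsx (ψ k)
      exact tendsto_nhds_unique (h2 ▸ h1) hwx
    have hdten : Filter.Tendsto (fun k => γ.deriv (s (ψ k))) Filter.atTop
        (𝓝 (γ.deriv sl)) := (γ.contDeriv sl hsl).tendsto.comp hsten
    have hdne : γ.deriv sl ≠ 0 := γ.deriv_ne_zero sl hsl
    set L : ℕ → ℝ := fun k =>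
      (inner ℝ ((w k).2) (γ.deriv (s (ψ k))) : ℝ) / ‖γ.deriv (s (ψ k))‖ ^ 2 with hLdef
    set Ll : ℝ := (inner ℝ p.2 (γ.deriv sl) : ℝ) / ‖γ.deriv sl‖ ^ 2 with hLl
    have hLten : Filter.Tendsto L Filter.atTop (𝓝 Ll) := by
      apply Filter.Tendsto.div (hwq.inner hdten) ((hdten.norm).pow 2)
      exact pow_ne_zero 2 (norm_ne_zero_iff.mpr hdne)
    have hwq2 : ∀ k, (w k).2 = L k • γ.deriv (s (ψ k)) := fun k => by
      obtain ⟨lam, hlam⟩ := hlamex (ψ k)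
      rw [hLdef]
      simp only []
      rw [Stmt6Aux.inner_smul_div (γ.deriv_ne_zero _ (hsmem' k)) hlam]
      exact hlam
    have hqLl : p.2 = Ll • γ.deriv sl := by
      have h1 : Filter.Tendsto (fun k => L k • γ.deriv (s (ψ k))) Filter.atTop
          (𝓝 (Ll • γ.deriv sl)) := hLten.smul hdten
      have h2 : (fun k => L k • γ.deriv (s (ψ k))) = fun k => (w k).2 :=
        funext fun k => (hwq2 k).symm
      exact (tendsto_nhds_unique hwq (h2 ▸ h1))
    have hLagk : ∀ k, Lagr (H γ) (s (ψ k)) (L k) ≤ r := fun k => hLag (ψ k)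
    have hHγ : IsHamiltonian (H γ) := hH.isHam γ hγ
    by_cases hxV : p.1 ∈ Γ.V
    · -- vertex: sl must be an endpoint
      have hsl01 : sl = 0 ∨ sl = 1 := by
        by_contra hsl01
        push_neg at hsl01
        have hIoo : sl ∈ Ioo (0:ℝ) 1 :=
          ⟨lt_of_le_of_ne hsl.1 (Ne.symm hsl01.1), lt_of_le_of_ne hsl.2 hsl01.2⟩
        obtain ⟨γ'', hγ'', hor⟩ := hxV
        have hni := Γ.no_vertex_inside γ hγ γ'' hγ'' sl hIoo
        rcases hor with h0 | h1
        · exact hni.1 (hγsl.trans h0.symm)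
        · exact hni.2 (hγsl.trans h1.symm)
      rcases hsl01 with hsl0 | hsl1
      · -- sl = 0 : switch to the inverse arc
        subst hsl0
        obtain ⟨β, hβ, hinv⟩ := Γ.closed_inv γ hγ
        have h1mem : (1:ℝ) ∈ Icc (0:ℝ) 1 := ⟨zero_le_one, le_refl 1⟩
        have hβ1 : β.toFun 1 = p.1 := by
          have := hinv 1 h1mem
          rw [this]
          norm_num
          exact hγsl
        have hβd : β.deriv 1 = - γ.deriv 0 := by
          rw [Stmt6Aux.inv_deriv hinv h1mem]
          norm_num
        have hβH : IsHamiltonian (H β) := hH.isHam β hβ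
        have hflip : ∀ σ ∈ Icc (0:ℝ) 1, ∀ κ : ℝ,
            Lagr (H β) σ κ = Lagr (H γ) (1 - σ) (-κ) := fun σ hσ κ =>
          Stmt6Aux.lagr_flip (fun t ht μ => hH.compat γ hγ β hβ hinv t ht μ) hσ κ
        have hle' : ∀ k, Lagr (H β) (1 - s (ψ k)) (-(L k)) ≤ r := fun k => by
          rw [hflip _ ⟨by linarith [(hsmem' k).2], by linarith [(hsmem' k).1]⟩,
            sub_sub_cancel, neg_neg]
          exact hLagk k
        have hmem' : ∀ k, 1 - s (ψ k) ∈ Icc (0:ℝ) 1 := fun k =>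
          ⟨by linarith [(hsmem' k).2], by linarith [(hsmem' k).1]⟩
        have hsten' : Filter.Tendsto (fun k => 1 - s (ψ k)) Filter.atTop (𝓝 1) := by
          simpa using hsψ.const_sub 1
        have hLten' : Filter.Tendsto (fun k => -(L k)) Filter.atTop (𝓝 (-Ll)) := hLten.neg
        have hqβ : p.2 = (-Ll) • β.deriv 1 := by
          rw [hβd, smul_neg, neg_smul, neg_neg]
          exact hqLl
        by_cases hq0 : p.2 = 0
        · have hLl0 : Ll = 0 := by
            rw [hLl, hq0, inner_zero_left, zero_div]
          have hrc : r < c p.1 := by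
            rw [hq0, Stmt6Aux.eLag_vertex_zero Γ H c hxV] at hrf
            exact EReal.coe_lt_coe_iff.mp hrf
          have hcc : c p.1 ≤ cHam (H β) := hc p.1 hxV β hβ hβ1
          have hr' : r < Lagr (H β) 1 (-Ll) := by
            rw [hLl0, neg_zero]
            linarith [Stmt6Aux.cHam_le_lagr hβH]
          exact Stmt6Aux.no_seq hβH h1mem hmem' hsten' hLten' hle' hr'
        · have hle2 := Stmt6Aux.eLag_le_vertex Γ H c hxV hq0 hβ hβ1 (-Ll) hqβ
          have heq : (inner ℝ p.2 (β.deriv 1) : ℝ) / ‖β.deriv 1‖ ^ 2 = -Ll :=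
            Stmt6Aux.inner_smul_div (β.deriv_ne_zero 1 h1mem) hqβ
          have hr' : r < Lagr (H β) 1 (-Ll) := by
            have := lt_of_lt_of_le hrf hle2
            rw [heq] at this
            exact EReal.coe_lt_coe_iff.mp this
          exact Stmt6Aux.no_seq hβH h1mem hmem' hsten' hLten' hle' hr'
      · -- sl = 1
        subst hsl1
        have h1mem : (1:ℝ) ∈ Icc (0:ℝ) 1 := ⟨zero_le_one, le_refl 1⟩
        by_cases hq0 : p.2 = 0
        · have hLl0 : Ll = 0 := by
            rw [hLl, hq0, inner_zero_left, zero_div]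
          have hrc : r < c p.1 := by
            rw [hq0, Stmt6Aux.eLag_vertex_zero Γ H c hxV] at hrf
            exact EReal.coe_lt_coe_iff.mp hrf
          have hcc : c p.1 ≤ cHam (H γ) := hc p.1 hxV γ hγ hγsl
          have hr' : r < Lagr (H γ) 1 Ll := by
            rw [hLl0]
            linarith [Stmt6Aux.cHam_le_lagr hHγ]
          exact Stmt6Aux.no_seq hHγ h1mem hsmem' hsψ hLten hLagk hr'
        · have hle2 := Stmt6Aux.eLag_le_vertex Γ H c hxV hq0 hγ hγsl Ll hqLl
          have heq : (inner ℝ p.2 (γ.deriv 1) : ℝ) / ‖γ.deriv 1‖ ^ 2 = Ll :=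
            Stmt6Aux.inner_smul_div hdne hqLl
          have hr' : r < Lagr (H γ) 1 Ll := by
            have := lt_of_lt_of_le hrf hle2
            rw [heq] at this
            exact EReal.coe_lt_coe_iff.mp this
          exact Stmt6Aux.no_seq hHγ h1mem hsmem' hsψ hLten hLagk hr'
    · -- interior point
      have hIoo : sl ∈ Ioo (0:ℝ) 1 := by
        constructor
        · rcases lt_or_eq_of_le hsl.1 with h | h
          · exact h
          · exact absurd ⟨γ, hγ, Or.inl (by rw [h]; exact hγsl)⟩ hxV
        · rcases lt_or_eq_of_le hsl.2 with h | h
          · exact h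
          · exact absurd ⟨γ, hγ, Or.inr (by rw [← h]; exact hγsl)⟩ hxV
      have hle2 := Stmt6Aux.eLag_le_interior Γ H c hxV hγ hIoo hγsl Ll hqLl
      have heq : (inner ℝ p.2 (γ.deriv sl) : ℝ) / ‖γ.deriv sl‖ ^ 2 = Ll := rfl
      have hr' : r < Lagr (H γ) sl Ll := by
        have := lt_of_lt_of_le hrf hle2
        rw [heq] at this
        exact EReal.coe_lt_coe_iff.mp this
      exact Stmt6Aux.no_seq hHγ hsl hsmem' hsψ hLten hLagk hr'
end
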